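/- Let t ≥ 3, let z be a vertex of degree 2 in a graph G with neighbors x and y, and let J be an xy-outerplanar graph on at least three vertices with V(J) ∩ V(G) = {x, y}. Let G' be the graph obtained from G by replacing the path xzy with J, that is, G' = (G − z) ∪ J. Then G is K_{2,t}-minor-free if and only if G' is K_{2,t}-minor-free. -/

import Mathlib

namespace K24Paper

open SimpleGraph

/-- `H` is a minor of `G`: branch sets indexed by vertices of `H`, pairwise disjoint,
each inducing a connected subgraph of `G`, with every edge of `H` realized by an edge
of `G` between the corresponding branch sets. -/
def IsMinor {W V : Type*} (H : SimpleGraph W) (G : SimpleGraph V) : Prop :=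
  ∃ B : W → Set V,
    (∀ w, (G.induce (B w)).Connected) ∧
    (∀ w₁ w₂, w₁ ≠ w₂ → Disjoint (B w₁) (B w₂)) ∧
    (∀ w₁ w₂, H.Adj w₁ w₂ → ∃ v₁ ∈ B w₁, ∃ v₂ ∈ B w₂, G.Adj v₁ v₂)

/-- `G` is `H`-minor-free. -/
def MinorFree {W V : Type*} (H : SimpleGraph W) (G : SimpleGraph V) : Prop :=
  ¬ IsMinor H G

/-- The complete bipartite graph `K_{2,4}`. -/
def K24 : SimpleGraph (Fin 2 ⊕ Fin 4) := completeBipartiteGraph (Fin 2) (Fin 4)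

/-- `G` is `k`-connected: more than `k` vertices, and removing fewer than `k`
vertices leaves a connected graph. -/
def KConnected {V : Type*} (k : ℕ) (G : SimpleGraph V) : Prop :=
  k < Nat.card V ∧ ∀ S : Set V, S.ncard < k → (G.induce Sᶜ).Connected

/-- The graph `G_{n,r,s}` (with the plus edge if `plus = true`), on vertices
`0, …, n-1` corresponding to `v_1, …, v_n`:  the spine `v_1 v_2 ⋯ v_n`, the edges
`v_1 v_{n-i}` for `1 ≤ i ≤ r`, the edges `v_n v_{1+j}` for `1 ≤ j ≤ s`, and
(if `plus`) the plus edge `v_1 v_n`. -/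
def Gnrs (n r s : ℕ) (plus : Bool) : SimpleGraph (Fin n) :=
  SimpleGraph.fromRel (fun a b =>
    b.val = a.val + 1 ∨
    (a.val = 0 ∧ n - 1 - r ≤ b.val ∧ b.val ≤ n - 2) ∨
    (b.val = n - 1 ∧ 1 ≤ a.val ∧ a.val ≤ s) ∨
    (plus = true ∧ a.val = 0 ∧ b.val = n - 1))

/-- The parameter conditions describing membership in the class `𝒢`. -/
def Gparams (n r s : ℕ) (plus : Bool) : Prop :=
  (plus = true ∧ 4 ≤ n ∧ ((r = 1 ∧ s = n - 3) ∨ (r = n - 3 ∧ s = 1))) ∨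
  (5 ≤ n ∧ 2 ≤ r ∧ r ≤ n - 3 ∧ 2 ≤ s ∧ s ≤ n - 3 ∧ (r + s = n - 2 ∨ r + s = n - 1))

/-- `G` belongs to `𝒢̃`, i.e. `G` is isomorphic to a graph of the class `𝒢`. -/
def InGtilde {V : Type*} (G : SimpleGraph V) : Prop :=
  ∃ n r s plus, Gparams n r s plus ∧ Nonempty (G ≃g Gnrs n r s plus)

/-- The graph obtained from `G` by subdividing every edge in `F` once:
new vertices are the members of `F`. -/
def SubdivideEdges {V : Type*} (G : SimpleGraph V) (F : Set (Sym2 V)) :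
    SimpleGraph (V ⊕ F) :=
  SimpleGraph.fromRel (fun a b =>
    match a, b with
    | Sum.inl u, Sum.inl v => G.Adj u v ∧ s(u, v) ∉ F
    | Sum.inl u, Sum.inr e => u ∈ (e : Sym2 V)
    | Sum.inr e, Sum.inl u => u ∈ (e : Sym2 V)
    | Sum.inr _, Sum.inr _ => False)

/-- A set `F` of edges of a graph `G` is subdividable if subdividing every edge
of `F` once yields a `K_{2,4}`-minor-free graph. -/
def Subdividable {V : Type*} (G : SimpleGraph V) (F : Set (Sym2 V)) : Prop :=
  F ⊆ G.edgeSet ∧ MinorFree K24 (SubdivideEdges G F)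

/-- `F` is a maximal subdividable set of edges of `G`. -/
def MaxSubdividable {V : Type*} (G : SimpleGraph V) (F : Set (Sym2 V)) : Prop :=
  Subdividable G F ∧ ∀ F', Subdividable G F' → F ⊆ F' → F' = F

/-- `l` lists vertices along a path of `G` (consecutive entries adjacent, no repeats)
such that no two edges of `G` cross with respect to this ordering. -/
def OuterListing {U : Type*} (G : SimpleGraph U) (l : List U) : Prop :=
  l.Nodup ∧ l.Chain' G.Adj ∧
  ∀ (i k j m : ℕ) (h1 : i < k) (h2 : k < j) (h3 : j < m) (hm : m < l.length),
    ¬(G.Adj (l.get ⟨i, by omega⟩) (l.get ⟨j, by omega⟩) ∧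
      G.Adj (l.get ⟨k, by omega⟩) (l.get ⟨m, by omega⟩))

/-- The graph `G` restricted to the vertex set `A` is `xy`-outerplanar: it has a
hamilton `xy`-path (listing exactly the vertices of `A`) such that no two edges
cross with respect to it. -/
def XYOuterplanar {U : Type*} (G : SimpleGraph U) (A : Set U) (x y : U) : Prop :=
  ∃ l : List U, (∀ v, v ∈ l ↔ v ∈ A) ∧ l.head? = some x ∧ l.getLast? = some y ∧
    OuterListing G l

/-- A block: a connected graph with no cutvertex. -/
def IsBlock {V : Type*} (G : SimpleGraph V) : Prop :=
  G.Connected ∧ ∀ v : V, (G.induce {u | u ≠ v}).Preconnected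

/-- `G + xy`: the graph `G` with the edge `xy` added (if not already present). -/
def AddEdge {U : Type*} (G : SimpleGraph U) (x y : U) : SimpleGraph U :=
  G ⊔ SimpleGraph.fromRel (fun a b => a = x ∧ b = y)

/-- A standard `K_{2,t}` minor `(R₁, R₂; S)` of `G`. -/
def StdK2tMinor {V : Type*} (G : SimpleGraph V) (t : ℕ) (R₁ R₂ S : Set V) : Prop :=
  Disjoint R₁ R₂ ∧ Disjoint (R₁ ∪ R₂) S ∧
  (G.induce R₁).Connected ∧ (G.induce R₂).Connected ∧
  S.Finite ∧ S.ncard = t ∧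
  ∀ v ∈ S, (∃ w ∈ R₁, G.Adj v w) ∧ (∃ w ∈ R₂, G.Adj v w)

/-- `K_{3,3}` with parts `{0,1,2}` and `{3,4,5}`. -/
def K33 : SimpleGraph (Fin 6) :=
  SimpleGraph.fromRel (fun a b => a.val < 3 ∧ 3 ≤ b.val)

/-- The graph `A = K_{3,3} + v₂v₃`. -/
def GA : SimpleGraph (Fin 6) := AddEdge K33 1 2

/-- The graph `A⁺ = K_{3,3} + v₂v₃ + v₅v₆`. -/
def GAplus : SimpleGraph (Fin 6) := AddEdge GA 4 5

/-- The graph `B`, on vertices `h, r₁, r₂, r₃, r₄, g₁, g₂ = 0, …, 6`. -/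
def GB : SimpleGraph (Fin 7) :=
  SimpleGraph.fromRel (fun a b => (a.val, b.val) ∈
    [(0,3),(0,4),(1,4),(2,3),(3,4),(5,0),(5,1),(5,2),(6,0),(6,1),(6,2)])

/-- The graph `B⁺ = B + g₁g₂`. -/
def GBplus : SimpleGraph (Fin 7) := AddEdge GB 5 6

/-- The graph `C⁺`, on vertices `v₁, …, v₈ = 0, …, 7`. -/
def GCplus : SimpleGraph (Fin 8) :=
  SimpleGraph.fromRel (fun a b => (a.val, b.val) ∈
    [(0,1),(0,2),(1,2),(3,4),(3,5),(3,6),(3,7),(4,5),(4,6),(4,7),(2,5),(1,7),(0,6)])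

/-- The graph `C = C⁺ ∖ v₄v₅`. -/
def GC : SimpleGraph (Fin 8) := GCplus.deleteEdges {s(3, 4)}

/-- The graph `D`, on vertices `t₁, t₂, t₃, d₁, d₂, d₃, g = 0, …, 6`. -/
def GD : SimpleGraph (Fin 7) :=
  SimpleGraph.fromRel (fun a b => (a.val, b.val) ∈
    [(0,1),(0,2),(1,2),(3,4),(3,5),(4,5),(0,3),(1,4),(2,5),(6,0),(6,1),(6,2)])

/-- The complete graph `K₅`. -/
def GK5 : SimpleGraph (Fin 5) := completeGraph (Fin 5)

end K24Paper

namespace K24Paper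

open SimpleGraph


/-! ### Auxiliary infrastructure -/

open Relation

section ConnInfra
variable {U : Type*}
variable {U : Type*}

def VStep (F : SimpleGraph U) (S : Set U) (u v : U) : Prop := u ∈ S ∧ v ∈ S ∧ F.Adj u v

def VConn (F : SimpleGraph U) (S : Set U) : Prop :=
  S.Nonempty ∧ ∀ a ∈ S, ∀ b ∈ S, ReflTransGen (VStep F S) a b

lemma vstep_symm {F : SimpleGraph U} {S : Set U} {u v : U} (h : VStep F S u v) : VStep F S v u :=
  ⟨h.2.1, h.1, h.2.2.symm⟩

lemma rtg_symm {α : Type*} {r : α → α → Prop} (hs : ∀ {a b : α}, r a b → r b a) {a b : α}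
    (h : ReflTransGen r a b) : ReflTransGen r b a := by
  induction h with
  | refl => exact .refl
  | tail _ h ih => exact .trans (.single (hs h)) ih

lemma walk_rtg {F : SimpleGraph U} {S : Set U} :
    ∀ {a b : ↥S}, (F.induce S).Walk a b → ReflTransGen (VStep F S) a.1 b.1 := by
  intro a b w
  induction w with
  | nil => exact .refl
  | cons h _ ih => exact .head ⟨(by exact Subtype.mem _), Subtype.mem _, h⟩ ih

lemma vconn_iff {F : SimpleGraph U} {S : Set U} : VConn F S ↔ (F.induce S).Connected := by
  constructor
  · rintro ⟨⟨a, ha⟩, h⟩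
    rw [connected_iff]
    refine ⟨?_, ⟨⟨a, ha⟩⟩⟩
    rintro ⟨u, hu⟩ ⟨v, hv⟩
    have key : ∀ p q, ReflTransGen (VStep F S) p q → ∀ (hp : p ∈ S) (hq : q ∈ S),
        (F.induce S).Reachable ⟨p, hp⟩ ⟨q, hq⟩ := by
      intro p q hr
      induction hr with
      | refl => intro hp hq; rfl
      | tail h1 h2 ih =>
        intro hp hq
        exact (ih hp h2.1).trans (SimpleGraph.Adj.reachable (by exact h2.2.2))
    exact key u v (h u hu v hv) hu hv
  · intro h
    obtain ⟨ne⟩ := h.nonempty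
    refine ⟨⟨ne.1, ne.2⟩, ?_⟩
    intro a ha b hb
    obtain ⟨w⟩ := h.preconnected ⟨a, ha⟩ ⟨b, hb⟩
    exact walk_rtg w

lemma vconn_singleton (F : SimpleGraph U) (v : U) : VConn F {v} := by
  refine ⟨⟨v, rfl⟩, ?_⟩
  rintro a rfl b rfl
  exact .refl

lemma vconn_isolated {F : SimpleGraph U} {S : Set U} {v : U} (h : VConn F S) (hv : v ∈ S)
    (hiso : ∀ u, ¬ F.Adj v u) : S = {v} := by
  ext u
  simp only [Set.mem_singleton_iff]
  constructor
  · intro hu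
    have key : ∀ c, ReflTransGen (VStep F S) v c → c = v := by
      intro c hc
      induction hc with
      | refl => rfl
      | tail h1 h2 ih => exact absurd (ih ▸ h2.2.2) (hiso _)
    exact key u (h.2 v hv u hu)
  · rintro rfl; exact hv

lemma rtg_exit {r : U → U → Prop} {T : Set U} {a b : U} (h : ReflTransGen r a b)
    (ha : a ∈ T) (hb : b ∉ T) : ∃ u ∈ T, ∃ v, v ∉ T ∧ r u v := by
  induction h with
  | refl => exact absurd ha hb
  | @tail p q h1 h2 ih =>
    by_cases hm : p ∈ T
    · exact ⟨p, hm, q, hb, h2⟩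
    · exact ih hm

lemma mapconn {F F' : SimpleGraph U} {A A' : Set U} (φ : U → U)
    (hA : VConn F A)
    (hstep : ∀ u v, VStep F A u v → ReflTransGen (VStep F' A') (φ u) (φ v))
    (himg : ∀ a ∈ A, φ a ∈ A')
    (hne : A'.Nonempty)
    (hback : ∀ b ∈ A', ∃ a ∈ A, ReflTransGen (VStep F' A') b (φ a)) :
    VConn F' A' := by
  refine ⟨hne, ?_⟩
  intro b hb b' hb'
  obtain ⟨a, ha, hba⟩ := hback b hb
  obtain ⟨a', ha', hba'⟩ := hback b' hb'
  have key : ∀ p q, ReflTransGen (VStep F A) p q → ReflTransGen (VStep F' A') (φ p) (φ q) := by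
    intro p q h
    induction h with
    | refl => exact .refl
    | tail h1 h2 ih => exact ih.trans (hstep _ _ h2)
  exact hba.trans ((key a a' (hA.2 a ha a' ha')).trans (rtg_symm vstep_symm hba'))

end ConnInfra

section NAbstract
variable {E : ℕ → ℕ → Prop}

def NStep (E : ℕ → ℕ → Prop) (P : Set ℕ) (a b : ℕ) : Prop := a ∈ P ∧ b ∈ P ∧ E a b

def NConn (E : ℕ → ℕ → Prop) (P : Set ℕ) : Prop :=
  ∀ a ∈ P, ∀ b ∈ P, ReflTransGen (NStep E P) a b

variable (hsym : ∀ {a b : ℕ}, E a b → E b a)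
variable (hnc : ∀ {i k j m : ℕ}, i < k → k < j → j < m → E i j → E k m → False)

include hsym hnc
set_option linter.unusedVariables false
set_option linter.unusedSectionVars false

lemma nsep {P : Set ℕ} {p q u v : ℕ} (hP : NConn E P) (hpq : E p q) (hplq : p < q)
    (hp : p ∉ P) (hq : q ∉ P) (hu : u ∈ P) (hpu : p < u) (huq : u < q)
    (hv : v ∈ P) (hvout : v < p ∨ q < v) : False := by
  have key : ∀ c, ReflTransGen (NStep E P) v c → p < c → c < q → False := by
    intro c hc
    induction hc with
    | refl => intro h1 h2; rcases hvout with h | h <;> omega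
    | @tail b c h1 h2 ih =>
      intro hc1 hc2
      by_cases hbi : p < b ∧ b < q
      · exact ih hbi.1 hbi.2
      · have hbp : b ≠ p := fun h => hp (h ▸ h2.1)
        have hbq : b ≠ q := fun h => hq (h ▸ h2.1)
        rcases (by omega : b < p ∨ q < b) with h | h
        · exact hnc h hc1 hc2 h2.2.2 hpq
        · exact hnc hc1 hc2 h hpq (hsym h2.2.2)
  exact key u (hP v hv u hu) hpu huq

omit hsym hnc in
lemma njump {P : Set ℕ} {u v p : ℕ} (hP : NConn E P) (hu : u ∈ P) (hv : v ∈ P)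
    (hup : u < p) (hpv : p < v) (hp : p ∉ P) :
    ∃ e ∈ P, ∃ f ∈ P, E e f ∧ e < p ∧ p < f := by
  have key : ∀ c, ReflTransGen (NStep E P) u c → p < c →
      ∃ e ∈ P, ∃ f ∈ P, E e f ∧ e < p ∧ p < f := by
    intro c hc
    induction hc with
    | refl => intro h; omega
    | @tail b c h1 h2 ih =>
      intro hc1
      by_cases hb : p < b
      · exact ih hb
      · have : b ≠ p := fun h => hp (h ▸ h2.1)
        exact ⟨b, h2.1, c, h2.2.1, h2.2.2, by omega, hc1⟩
  exact key v (hP u hu v hv) hpv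

lemma ndichot {P : Set ℕ} {p q : ℕ} (hP : NConn E P) (hpq : E p q) (hplq : p < q)
    (hp : p ∉ P) (hq : q ∉ P) :
    (∀ a ∈ P, p < a ∧ a < q) ∨ (∀ a ∈ P, a < p ∨ q < a) := by
  by_cases hin : ∃ u ∈ P, p < u ∧ u < q
  · obtain ⟨u, hu, h1, h2⟩ := hin
    left
    intro a ha
    by_contra hcon
    have hap : a ≠ p := fun h => hp (h ▸ ha)
    have haq : a ≠ q := fun h => hq (h ▸ ha)
    exact nsep hsym hnc hP hpq hplq hp hq hu h1 h2 ha (by omega)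
  · right
    intro a ha
    have hap : a ≠ p := fun h => hp (h ▸ ha)
    have haq : a ≠ q := fun h => hq (h ▸ ha)
    have : ¬ (p < a ∧ a < q) := fun h => hin ⟨a, ha, h⟩
    omega

omit hsym hnc in
lemma nside {T 𝒰 : Set ℕ} {m : ℕ} (hT : NConn E T) (hsub : ∀ a ∈ T, a ∈ 𝒰) (hm : m ∉ T)
    (hexp : ∀ e f, e ∈ 𝒰 → f ∈ 𝒰 → E e f → ¬(e < m ∧ m < f)) :
    (∀ a ∈ T, a < m) ∨ (∀ a ∈ T, m < a) := by
  by_cases hlo : ∃ a ∈ T, a < m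
  · obtain ⟨a, ha, halt⟩ := hlo
    left
    intro b hb
    by_contra hcon
    have hbm : b ≠ m := fun h => hm (h ▸ hb)
    obtain ⟨e, he, f, hf, hef, h1, h2⟩ := njump hT ha hb halt (by omega) hm
    exact hexp e f (hsub e he) (hsub f hf) hef ⟨h1, h2⟩
  · right
    intro a ha
    have h1 : a ≠ m := fun h => hm (h ▸ ha)
    have h2 : ¬ a < m := fun h => hlo ⟨a, ha, h⟩
    omega

lemma nstrad {X W Y : Set ℕ} (hX : NConn E X) (hW : NConn E W) (hY : NConn E Y)
    (hXW : ∀ a ∈ X, a ∉ W) (hXY : ∀ a ∈ X, a ∉ Y) (hWY : ∀ a ∈ W, a ∉ Y)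
    {x1 x2 w : ℕ} (hx1 : x1 ∈ X) (hx2 : x2 ∈ X) (hw : w ∈ W) (h1 : x1 < w) (h2 : w < x2)
    {yy tt : ℕ} (hyy : yy ∈ Y) (htt : tt ∈ W) (hyt : E yy tt)
    {ξ : ℕ} (hξ : ξ ∈ Y) (hside : (∀ a ∈ X, ξ < a) ∨ (∀ a ∈ X, a < ξ)) : False := by
  have hwX : w ∉ X := fun h => hXW w h hw
  obtain ⟨e, he, f, hf, hef, hep, hpf⟩ := njump hX hx1 hx2 h1 h2 hwX
  have hWin : ∀ a ∈ W, e < a ∧ a < f := by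
    rcases ndichot hsym hnc hW hef (by omega) (hXW e he) (hXW f hf) with h | h
    · exact h
    · rcases h w hw with h' | h' <;> omega
  have hYout : ∀ a ∈ Y, a < e ∨ f < a := by
    rcases ndichot hsym hnc hY hef (by omega) (hXY e he) (hXY f hf) with h | h
    · exfalso
      rcases h ξ hξ with ⟨h1', h2'⟩
      rcases hside with hs | hs
      · exact absurd (hs e he) (by omega)
      · exact absurd (hs f hf) (by omega)
    · exact h
  have htin := hWin tt htt
  rcases hYout yy hyy with h | h
  · exact hnc h htin.1 htin.2 hyt hef
  · exact hnc htin.1 htin.2 h hef (hsym hyt)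

lemma nopgen {R1 R2 S1 S2 : Set ℕ}
    (hR1 : NConn E R1) (hR2 : NConn E R2) (hS1 : NConn E S1) (hS2 : NConn E S2)
    (hR12 : ∀ a ∈ R1, a ∉ R2) (hR1S1 : ∀ a ∈ R1, a ∉ S1) (hR1S2 : ∀ a ∈ R1, a ∉ S2)
    (hR2S1 : ∀ a ∈ R2, a ∉ S1) (hR2S2 : ∀ a ∈ R2, a ∉ S2) (hS12 : ∀ a ∈ S1, a ∉ S2)
    {α ω : ℕ} (hαR : α ∈ R1) (hωR : ω ∈ R2)
    (hα : ∀ a, a ∈ R1 ∪ R2 ∪ S1 ∪ S2 → α ≤ a) (hω : ∀ a, a ∈ R1 ∪ R2 ∪ S1 ∪ S2 → a ≤ ω)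
    (h11 : ∃ a ∈ S1, ∃ b ∈ R1, E a b) (h12 : ∃ a ∈ S1, ∃ b ∈ R2, E a b)
    (h21 : ∃ a ∈ S2, ∃ b ∈ R1, E a b) (h22 : ∃ a ∈ S2, ∃ b ∈ R2, E a b) : False := by
  have hmS1 : ∀ a ∈ S1, a ∈ R1 ∪ R2 ∪ S1 ∪ S2 := fun a ha => Or.inl (Or.inr ha)
  have hmS2 : ∀ a ∈ S2, a ∈ R1 ∪ R2 ∪ S1 ∪ S2 := fun a ha => Or.inr ha
  have hmR1 : ∀ a ∈ R1, a ∈ R1 ∪ R2 ∪ S1 ∪ S2 := fun a ha => Or.inl (Or.inl (Or.inl ha))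
  have hmR2 : ∀ a ∈ R2, a ∈ R1 ∪ R2 ∪ S1 ∪ S2 := fun a ha => Or.inl (Or.inl (Or.inr ha))
  have hαS1 : ∀ a ∈ S1, α < a :=
    fun a ha => lt_of_le_of_ne (hα a (hmS1 a ha)) (fun h => hR1S1 α hαR (h ▸ ha))
  have hαS2 : ∀ a ∈ S2, α < a :=
    fun a ha => lt_of_le_of_ne (hα a (hmS2 a ha)) (fun h => hR1S2 α hαR (h ▸ ha))
  have hαR2 : ∀ a ∈ R2, α < a :=
    fun a ha => lt_of_le_of_ne (hα a (hmR2 a ha)) (fun h => hR12 α hαR (h ▸ ha))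
  have hωS1 : ∀ a ∈ S1, a < ω :=
    fun a ha => lt_of_le_of_ne (hω a (hmS1 a ha)) (fun h => hR2S1 ω hωR (h ▸ ha))
  have hωS2 : ∀ a ∈ S2, a < ω :=
    fun a ha => lt_of_le_of_ne (hω a (hmS2 a ha)) (fun h => hR2S2 ω hωR (h ▸ ha))
  have hωR1 : ∀ a ∈ R1, a < ω :=
    fun a ha => lt_of_le_of_ne (hω a (hmR1 a ha)) (fun h => hR12 ω (h ▸ ha) hωR)
  -- no straddles
  have nstr12 : ∀ s1 ∈ S1, ∀ s2 ∈ S2, ∀ s1' ∈ S1, s1 < s2 → s2 < s1' → False := by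
    intro s1 hs1 s2 hs2 s1' hs1' l1 l2
    obtain ⟨a2, ha2, b2, hb2, hE⟩ := h21
    exact nstrad hsym hnc hS1 hS2 hR1 hS12 (fun a ha h => hR1S1 a h ha)
      (fun a ha h => hR1S2 a h ha) hs1 hs1' hs2 l1 l2 hb2 ha2 (hsym hE) hαR
      (Or.inl (fun a ha => hαS1 a ha))
  have nstr21 : ∀ s2 ∈ S2, ∀ s1 ∈ S1, ∀ s2' ∈ S2, s2 < s1 → s1 < s2' → False := by
    intro s2 hs2 s1 hs1 s2' hs2' l1 l2
    obtain ⟨a1, ha1, b1, hb1, hE⟩ := h11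
    exact nstrad hsym hnc hS2 hS1 hR1 (fun a ha h => hS12 a h ha)
      (fun a ha h => hR1S2 a h ha) (fun a ha h => hR1S1 a h ha) hs2 hs2' hs1 l1 l2
      hb1 ha1 (hsym hE) hαR (Or.inl (fun a ha => hαS2 a ha))
  have hblk : (∀ a ∈ S1, ∀ b ∈ S2, a < b) ∨ (∀ a ∈ S2, ∀ b ∈ S1, a < b) := by
    obtain ⟨s10, hs10, -⟩ := h11
    obtain ⟨s20, hs20, -⟩ := h22
    have hne0 : s10 ≠ s20 := fun h => hS12 s10 hs10 (h ▸ hs20)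
    rcases lt_or_gt_of_ne hne0 with h0 | h0
    · left
      intro s1 hs1 s2 hs2
      by_contra hcon
      have hne : s1 ≠ s2 := fun h => hS12 s1 hs1 (h ▸ hs2)
      have hlt : s2 < s1 := by omega
      have hne1 : s10 ≠ s2 := fun h => hS12 s10 hs10 (h ▸ hs2)
      rcases lt_trichotomy s10 s2 with h | h | h
      · exact nstr12 s10 hs10 s2 hs2 s1 hs1 h hlt
      · exact hne1 h
      · exact nstr21 s2 hs2 s10 hs10 s20 hs20 h h0
    · right
      intro s2 hs2 s1 hs1
      by_contra hcon
      have hne : s2 ≠ s1 := fun h => hS12 s1 hs1 (h.symm ▸ hs2)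
      have hlt : s1 < s2 := by omega
      have hne1 : s20 ≠ s1 := fun h => hS12 s1 hs1 (h ▸ hs20)
      rcases lt_trichotomy s20 s1 with h | h | h
      · exact nstr21 s20 hs20 s1 hs1 s2 hs2 h hlt
      · exact hne1 h
      · exact nstr12 s1 hs1 s20 hs20 s10 hs10 h h0
  have key : ∀ (Sa Sb : Set ℕ), NConn E Sa → NConn E Sb →
      (∀ a ∈ Sa, a ∉ R1) → (∀ a ∈ Sa, a ∉ R2) → (∀ a ∈ Sb, a ∉ R1) → (∀ a ∈ Sb, a ∉ R2) →
      (∀ a ∈ Sa, α < a) → (∀ a ∈ Sb, a < ω) →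
      (∀ a ∈ Sa, ∀ b ∈ Sb, a < b) →
      (∃ a ∈ Sb, ∃ b ∈ R1, E a b) → (∃ a ∈ Sa, ∃ b ∈ R2, E a b) → False := by
    intro Sa Sb hSa hSb haR1 haR2 hbR1 hbR2 hαa hωb hab hEb hEa
    obtain ⟨t2, ht2, a2, ha2, hEa2⟩ := hEb
    obtain ⟨t1, ht1, b1, hb1, hEb1⟩ := hEa
    have ha2t1 : a2 < t1 := by
      by_contra hcon
      have hne : a2 ≠ t1 := fun h => haR1 t1 ht1 (h ▸ ha2)
      have hlt : t1 < a2 := by omega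
      obtain ⟨e, he, f, hf, hef, h1, h2⟩ :=
        njump hR1 hαR ha2 (hαa t1 ht1) hlt (fun h => haR1 t1 ht1 h)
      have hain : ∀ a ∈ Sa, e < a ∧ a < f := by
        rcases ndichot hsym hnc hSa hef (by omega) (fun h => haR1 e h he)
          (fun h => haR1 f h hf) with h | h
        · exact h
        · rcases h t1 ht1 with h' | h' <;> omega
      have hR2out : ∀ a ∈ R2, a < e ∨ f < a := by
        rcases ndichot hsym hnc hR2 hef (by omega) (fun h => hR12 e he h)
          (fun h => hR12 f hf h) with h | h
        · exfalso
          have h1' := h ω hωR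
          have h2' := hωR1 f hf
          omega
        · exact h
      have ht1in := hain t1 ht1
      rcases hR2out b1 hb1 with h | h
      · exact hnc h ht1in.1 ht1in.2 (hsym hEb1) hef
      · exact hnc ht1in.1 ht1in.2 h hef hEb1
    have ht2b1 : t2 < b1 := by
      by_contra hcon
      have hne : b1 ≠ t2 := fun h => hbR2 t2 ht2 (h ▸ hb1)
      have hlt : b1 < t2 := by omega
      obtain ⟨e, he, f, hf, hef, h1, h2⟩ :=
        njump hR2 hb1 hωR hlt (hωb t2 ht2) (fun h => hbR2 t2 ht2 h)
      have hbin : ∀ a ∈ Sb, e < a ∧ a < f := by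
        rcases ndichot hsym hnc hSb hef (by omega) (fun h => hbR2 e h he)
          (fun h => hbR2 f h hf) with h | h
        · exact h
        · rcases h t2 ht2 with h' | h' <;> omega
      have hR1out : ∀ a ∈ R1, a < e ∨ f < a := by
        rcases ndichot hsym hnc hR1 hef (by omega) (fun h => hR12 e h he)
          (fun h => hR12 f h hf) with h | h
        · exfalso
          have h1' := h α hαR
          have h2' := hαR2 e he
          omega
        · exact h
      have ht2in := hbin t2 ht2
      rcases hR1out a2 ha2 with h | h
      · exact hnc h ht2in.1 ht2in.2 (hsym hEa2) hef
      · exact hnc ht2in.1 ht2in.2 h hef hEa2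
    exact hnc ha2t1 (hab t1 ht1 t2 ht2) ht2b1 (hsym hEa2) hEb1
  rcases hblk with h | h
  · exact key S1 S2 hS1 hS2 (fun a ha h' => hR1S1 a h' ha) (fun a ha h' => hR2S1 a h' ha)
      (fun a ha h' => hR1S2 a h' ha) (fun a ha h' => hR2S2 a h' ha) hαS1 hωS2 h h21 h12
  · exact key S2 S1 hS2 hS1 (fun a ha h' => hR1S2 a h' ha) (fun a ha h' => hR2S2 a h' ha)
      (fun a ha h' => hR1S1 a h' ha) (fun a ha h' => hR2S1 a h' ha) hαS2 hωS1 h h11 h22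

lemma nrcore {C Q1 Q2 Q3 : Set ℕ}
    (hC : NConn E C) (hQ1 : NConn E Q1) (hQ2 : NConn E Q2) (hQ3 : NConn E Q3)
    (hCQ1 : ∀ a ∈ C, a ∉ Q1) (hCQ2 : ∀ a ∈ C, a ∉ Q2) (hCQ3 : ∀ a ∈ C, a ∉ Q3)
    (hQ12 : ∀ a ∈ Q1, a ∉ Q2) (hQ13 : ∀ a ∈ Q1, a ∉ Q3) (hQ23 : ∀ a ∈ Q2, a ∉ Q3)
    (hA1 : ∃ a ∈ C, ∃ b ∈ Q1, E a b) (hA2 : ∃ a ∈ C, ∃ b ∈ Q2, E a b)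
    (hA3 : ∃ a ∈ C, ∃ b ∈ Q3, E a b)
    {m1 m2 m3 : ℕ} (hm1 : m1 ∈ Q1) (hm2 : m2 ∈ Q2) (hm3 : m3 ∈ Q3)
    (hexp1 : ∀ e f, e ∈ C ∪ Q1 ∪ Q2 ∪ Q3 → f ∈ C ∪ Q1 ∪ Q2 ∪ Q3 → E e f →
      ¬(e < m1 ∧ m1 < f))
    (hexp2 : ∀ e f, e ∈ C ∪ Q1 ∪ Q2 ∪ Q3 → f ∈ C ∪ Q1 ∪ Q2 ∪ Q3 → E e f →
      ¬(e < m2 ∧ m2 < f))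
    (hexp3 : ∀ e f, e ∈ C ∪ Q1 ∪ Q2 ∪ Q3 → f ∈ C ∪ Q1 ∪ Q2 ∪ Q3 → E e f →
      ¬(e < m3 ∧ m3 < f)) : False := by
  have hmC : ∀ a ∈ C, a ∈ C ∪ Q1 ∪ Q2 ∪ Q3 := fun a ha => Or.inl (Or.inl (Or.inl ha))
  have hmQ1 : ∀ a ∈ Q1, a ∈ C ∪ Q1 ∪ Q2 ∪ Q3 := fun a ha => Or.inl (Or.inl (Or.inr ha))
  have hmQ2 : ∀ a ∈ Q2, a ∈ C ∪ Q1 ∪ Q2 ∪ Q3 := fun a ha => Or.inl (Or.inr ha)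
  have hmQ3 : ∀ a ∈ Q3, a ∈ C ∪ Q1 ∪ Q2 ∪ Q3 := fun a ha => Or.inr ha
  have med : ∀ (Qa Qc : Set ℕ) (ma mb mc : ℕ),
      NConn E Qa → NConn E Qc →
      ma ∈ Qa → mc ∈ Qc →
      (∀ a ∈ Qa, a ∈ C ∪ Q1 ∪ Q2 ∪ Q3) → (∀ a ∈ Qc, a ∈ C ∪ Q1 ∪ Q2 ∪ Q3) →
      (∀ a ∈ Qa, a ≠ mb) → (∀ a ∈ Qc, a ≠ mb) → (∀ a ∈ C, a ≠ mb) →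
      (∃ a ∈ C, ∃ b ∈ Qa, E a b) → (∃ a ∈ C, ∃ b ∈ Qc, E a b) →
      (∀ e f, e ∈ C ∪ Q1 ∪ Q2 ∪ Q3 → f ∈ C ∪ Q1 ∪ Q2 ∪ Q3 → E e f →
        ¬(e < mb ∧ mb < f)) →
      ma < mb → mb < mc → False := by
    intro Qa Qc ma mb mc hQa hQc hma hmc hsuba hsubc hnea hnec hneC hEa hEc hexpb hab hbc
    have haQ : ∀ a ∈ Qa, a < mb := by
      rcases nside hQa hsuba (fun h => hnea mb h rfl) hexpb with h | h
      · exact h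
      · exact absurd (h ma hma) (by omega)
    have hcQ : ∀ a ∈ Qc, mb < a := by
      rcases nside hQc hsubc (fun h => hnec mb h rfl) hexpb with h | h
      · exact absurd (h mc hmc) (by omega)
      · exact h
    rcases nside hC hmC (fun h => hneC mb h rfl) hexpb with hC' | hC'
    · obtain ⟨c, hc, tc, htc, hEct⟩ := hEc
      exact hexpb c tc (hmC c hc) (hsubc tc htc) hEct ⟨hC' c hc, hcQ tc htc⟩
    · obtain ⟨c, hc, ta, hta, hEct⟩ := hEa
      exact hexpb ta c (hsuba ta hta) (hmC c hc) (hsym hEct) ⟨haQ ta hta, hC' c hc⟩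
  have h12 : m1 ≠ m2 := fun h => hQ12 m1 hm1 (h ▸ hm2)
  have h13 : m1 ≠ m3 := fun h => hQ13 m1 hm1 (h ▸ hm3)
  have h23 : m2 ≠ m3 := fun h => hQ23 m2 hm2 (h ▸ hm3)
  have d12 : ∀ a ∈ Q1, a ≠ m2 := fun a ha h => hQ12 a ha (h ▸ hm2)
  have d13 : ∀ a ∈ Q1, a ≠ m3 := fun a ha h => hQ13 a ha (h ▸ hm3)
  have d21 : ∀ a ∈ Q2, a ≠ m1 := fun a ha h => hQ12 m1 hm1 (h ▸ ha)
  have d23 : ∀ a ∈ Q2, a ≠ m3 := fun a ha h => hQ23 a ha (h ▸ hm3)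
  have d31 : ∀ a ∈ Q3, a ≠ m1 := fun a ha h => hQ13 m1 hm1 (h ▸ ha)
  have d32 : ∀ a ∈ Q3, a ≠ m2 := fun a ha h => hQ23 m2 hm2 (h ▸ ha)
  have dc1 : ∀ a ∈ C, a ≠ m1 := fun a ha h => hCQ1 a ha (h ▸ hm1)
  have dc2 : ∀ a ∈ C, a ≠ m2 := fun a ha h => hCQ2 a ha (h ▸ hm2)
  have dc3 : ∀ a ∈ C, a ≠ m3 := fun a ha h => hCQ3 a ha (h ▸ hm3)
  rcases lt_trichotomy m1 m2 with h1 | h1 | h1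
  · rcases lt_trichotomy m2 m3 with h2 | h2 | h2
    · exact med Q1 Q3 m1 m2 m3 hQ1 hQ3 hm1 hm3 hmQ1 hmQ3 d12 d32 dc2 hA1 hA3 hexp2 h1 h2
    · exact h23 h2
    · rcases lt_trichotomy m1 m3 with h3 | h3 | h3
      · exact med Q1 Q2 m1 m3 m2 hQ1 hQ2 hm1 hm2 hmQ1 hmQ2 d13 d23 dc3 hA1 hA2 hexp3 h3 h2
      · exact h13 h3
      · exact med Q3 Q2 m3 m1 m2 hQ3 hQ2 hm3 hm2 hmQ3 hmQ2 d31 d21 dc1 hA3 hA2 hexp1 h3 h1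
  · exact h12 h1
  · rcases lt_trichotomy m1 m3 with h2 | h2 | h2
    · exact med Q2 Q3 m2 m1 m3 hQ2 hQ3 hm2 hm3 hmQ2 hmQ3 d21 d31 dc1 hA2 hA3 hexp1 h1 h2
    · exact h13 h2
    · rcases lt_trichotomy m2 m3 with h3 | h3 | h3
      · exact med Q2 Q1 m2 m3 m1 hQ2 hQ1 hm2 hm1 hmQ2 hmQ1 d23 d13 dc3 hA2 hA1 hexp3 h3 h2
      · exact h23 h3
      · exact med Q3 Q1 m3 m2 m1 hQ3 hQ1 hm3 hm1 hmQ3 hmQ1 d32 d12 dc2 hA3 hA1 hexp2 h3 h1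

lemma nwcoreAux {P1 P2 Q2 Q3 : Set ℕ}
    (hP1 : NConn E P1) (hP2 : NConn E P2) (hQ2 : NConn E Q2) (hQ3 : NConn E Q3)
    (hP12 : ∀ a ∈ P1, a ∉ P2) (hP1Q2 : ∀ a ∈ P1, a ∉ Q2) (hP1Q3 : ∀ a ∈ P1, a ∉ Q3)
    (hP2Q2 : ∀ a ∈ P2, a ∉ Q2) (hP2Q3 : ∀ a ∈ P2, a ∉ Q3) (hQ23 : ∀ a ∈ Q2, a ∉ Q3)
    (h12 : ∃ a ∈ P1, ∃ b ∈ Q2, E a b) (h13 : ∃ a ∈ P1, ∃ b ∈ Q3, E a b)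
    (h22 : ∃ a ∈ P2, ∃ b ∈ Q2, E a b) (h23 : ∃ a ∈ P2, ∃ b ∈ Q3, E a b)
    {p1 p2 : ℕ} (hp1 : p1 ∈ P1) (hp2 : p2 ∈ P2)
    (hexp1 : ∀ e f, e ∈ P1 ∪ P2 ∪ Q2 ∪ Q3 → f ∈ P1 ∪ P2 ∪ Q2 ∪ Q3 → E e f →
      ¬(e < p1 ∧ p1 < f))
    (hexp2 : ∀ e f, e ∈ P1 ∪ P2 ∪ Q2 ∪ Q3 → f ∈ P1 ∪ P2 ∪ Q2 ∪ Q3 → E e f →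
      ¬(e < p2 ∧ p2 < f))
    (hplt : p1 < p2) : False := by
  have hmP1 : ∀ a ∈ P1, a ∈ P1 ∪ P2 ∪ Q2 ∪ Q3 := fun a ha => Or.inl (Or.inl (Or.inl ha))
  have hmP2 : ∀ a ∈ P2, a ∈ P1 ∪ P2 ∪ Q2 ∪ Q3 := fun a ha => Or.inl (Or.inl (Or.inr ha))
  have hmQ2 : ∀ a ∈ Q2, a ∈ P1 ∪ P2 ∪ Q2 ∪ Q3 := fun a ha => Or.inl (Or.inr ha)
  have hmQ3 : ∀ a ∈ Q3, a ∈ P1 ∪ P2 ∪ Q2 ∪ Q3 := fun a ha => Or.inr ha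
  have hP2gt : ∀ a ∈ P2, p1 < a := by
    rcases nside hP2 hmP2 (fun h => hP12 p1 hp1 h) hexp1 with h | h
    · exact absurd (h p2 hp2) (by omega)
    · exact h
  have hP1lt : ∀ a ∈ P1, a < p2 := by
    rcases nside hP1 hmP1 (fun h => hP12 p2 h hp2) hexp2 with h | h
    · exact h
    · exact absurd (h p1 hp1) (by omega)
  have hQin : ∀ (Q : Set ℕ), NConn E Q → (∀ a ∈ Q, a ∈ P1 ∪ P2 ∪ Q2 ∪ Q3) →
      (∀ a ∈ Q, a ∉ P1) → (∀ a ∈ Q, a ∉ P2) →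
      (∃ a ∈ P1, ∃ b ∈ Q, E a b) → (∃ a ∈ P2, ∃ b ∈ Q, E a b) →
      ∀ a ∈ Q, p1 < a ∧ a < p2 := by
    intro Q hQ hsub hQP1 hQP2 hEP1 hEP2
    have h1 : ∀ a ∈ Q, p1 < a := by
      rcases nside hQ hsub (fun h => hQP1 p1 h hp1) hexp1 with h | h
      · exfalso
        obtain ⟨w, hw, v, hv, hE⟩ := hEP2
        exact hexp1 v w (hsub v hv) (hmP2 w hw) (hsym hE) ⟨h v hv, hP2gt w hw⟩
      · exact h
    have h2 : ∀ a ∈ Q, a < p2 := by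
      rcases nside hQ hsub (fun h => hQP2 p2 h hp2) hexp2 with h | h
      · exact h
      · exfalso
        obtain ⟨u, hu, v, hv, hE⟩ := hEP1
        exact hexp2 u v (hmP1 u hu) (hsub v hv) hE ⟨hP1lt u hu, h v hv⟩
    exact fun a ha => ⟨h1 a ha, h2 a ha⟩
  have hQ2in := hQin Q2 hQ2 hmQ2 (fun a ha h => hP1Q2 a h ha) (fun a ha h => hP2Q2 a h ha)
    h12 h22
  have hQ3in := hQin Q3 hQ3 hmQ3 (fun a ha h => hP1Q3 a h ha) (fun a ha h => hP2Q3 a h ha)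
    h13 h23
  have nstrQ : ∀ (QA QB : Set ℕ), NConn E QA → NConn E QB →
      (∀ a ∈ QA, a ∈ P1 ∪ P2 ∪ Q2 ∪ Q3) → (∀ a ∈ QB, a ∈ P1 ∪ P2 ∪ Q2 ∪ Q3) →
      (∀ a ∈ QB, a ∉ QA) → (∀ a ∈ QA, a ∉ P1) → (∀ a ∈ QA, p1 < a) →
      (∃ a ∈ P1, ∃ b ∈ QB, E a b) →
      ∀ qa ∈ QA, ∀ qb ∈ QB, ∀ qa' ∈ QA, qa < qb → qb < qa' → False := by
    intro QA QB hQA hQB_arg hsubA hsubB hBA hAP1 hAgt hE qa hqa qb hqb qa' hqa' l1 l2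
    obtain ⟨e, he, f, hf, hef, h1, h2⟩ := njump hQA hqa hqa' l1 l2 (fun h => hBA qb hqb h)
    have hBin : ∀ a ∈ QB, e < a ∧ a < f := by
      rcases ndichot hsym hnc hQB_arg hef (by omega) (fun h => hBA e h he)
        (fun h => hBA f h hf) with h | h
      · exact h
      · rcases h qb hqb with h' | h' <;> omega
    have hP1out : ∀ a ∈ P1, a < e ∨ f < a := by
      rcases ndichot hsym hnc hP1 hef (by omega) (fun h => hAP1 e he h)
        (fun h => hAP1 f hf h) with h | h
      · exfalso
        have h1' := (h p1 hp1).1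
        have h2' := hAgt e he
        omega
      · exact h
    obtain ⟨u, hu, v, hv, hE'⟩ := hE
    have hvin := hBin v hv
    rcases hP1out u hu with h | h
    · exact hnc h hvin.1 hvin.2 hE' hef
    · exact hnc hvin.1 hvin.2 h hef (hsym hE')
  have hblk : (∀ a ∈ Q2, ∀ b ∈ Q3, a < b) ∨ (∀ a ∈ Q3, ∀ b ∈ Q2, a < b) := by
    obtain ⟨-, -, q20, hq20, -⟩ := id h12
    obtain ⟨-, -, q30, hq30, -⟩ := id h13
    have hne0 : q20 ≠ q30 := fun h => hQ23 q20 hq20 (h ▸ hq30)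
    have n23 := nstrQ Q2 Q3 hQ2 hQ3 hmQ2 hmQ3 (fun a ha h => hQ23 a h ha)
      (fun a ha h => hP1Q2 a h ha) (fun a ha => (hQ2in a ha).1) h13
    have n32 := nstrQ Q3 Q2 hQ3 hQ2 hmQ3 hmQ2 (fun a ha h => hQ23 a ha h)
      (fun a ha h => hP1Q3 a h ha) (fun a ha => (hQ3in a ha).1) h12
    rcases lt_or_gt_of_ne hne0 with h0 | h0
    · left
      intro a ha b hb
      by_contra hcon
      have hne : a ≠ b := fun h => hQ23 a ha (h ▸ hb)
      have hlt : b < a := by omega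
      have hne1 : q20 ≠ b := fun h => hQ23 q20 hq20 (h ▸ hb)
      rcases lt_trichotomy q20 b with h | h | h
      · exact n23 q20 hq20 b hb a ha h hlt
      · exact hne1 h
      · exact n32 b hb q20 hq20 q30 hq30 h h0
    · right
      intro a ha b hb
      by_contra hcon
      have hne : a ≠ b := fun h => hQ23 b hb (h ▸ ha)
      have hlt : b < a := by omega
      have hne1 : q30 ≠ b := fun h => hQ23 b hb (h ▸ hq30)
      rcases lt_trichotomy q30 b with h | h | h
      · exact n32 q30 hq30 b hb a ha h hlt
      · exact hne1 h
      · exact n23 b hb q30 hq30 q20 hq20 h h0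
  have fin : ∀ (QA QB : Set ℕ), NConn E QA →
      (∀ a ∈ QA, a ∈ P1 ∪ P2 ∪ Q2 ∪ Q3) → (∀ a ∈ QB, a ∈ P1 ∪ P2 ∪ Q2 ∪ Q3) →
      (∀ a ∈ QA, a ∉ P1) → (∀ a ∈ QA, a ∉ P2) → (∀ a ∈ QB, a ∉ P1) → (∀ a ∈ QB, a ∉ P2) →
      (∀ a ∈ QA, p1 < a ∧ a < p2) → (∀ a ∈ QB, p1 < a ∧ a < p2) →
      (∀ a ∈ QA, ∀ b ∈ QB, a < b) →
      (∃ a ∈ P1, ∃ b ∈ QB, E a b) → (∃ a ∈ P2, ∃ b ∈ QA, E a b) → False := by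
    intro QA QB hQA_arg hsubA hsubB hAP1 hAP2 hBP1 hBP2 hAin hBin hAB hPB hPA2
    obtain ⟨u, hu, tb, htb, hEub⟩ := hPB
    obtain ⟨w, hw, t2, ht2, hEw⟩ := hPA2
    have huA : ∀ a ∈ QA, u < a := by
      intro qa hqa
      by_contra hcon
      have hne : qa ≠ u := fun h => hAP1 qa hqa (h ▸ hu)
      have hlt : qa < u := by omega
      obtain ⟨e, he, f, hf, hef, h1, h2⟩ :=
        njump hP1 hp1 hu (hAin qa hqa).1 hlt (fun h => hAP1 qa hqa h)
      have hQAin : ∀ a ∈ QA, e < a ∧ a < f := by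
        rcases ndichot hsym hnc hQA_arg hef (by omega) (fun h => hAP1 e h he)
          (fun h => hAP1 f h hf) with h | h
        · exact h
        · rcases h qa hqa with h' | h' <;> omega
      have hP2out : ∀ a ∈ P2, a < e ∨ f < a := by
        rcases ndichot hsym hnc hP2 hef (by omega) (fun h => hP12 e he h)
          (fun h => hP12 f hf h) with h | h
        · exfalso
          have h1' := (h p2 hp2).2
          have h2' := hP1lt f hf
          omega
        · exact h
      have ht2in := hQAin t2 ht2
      rcases hP2out w hw with h | h
      · exact hnc h ht2in.1 ht2in.2 hEw hef
      · exact hnc ht2in.1 ht2in.2 h hef (hsym hEw)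
    have hut2 : u < t2 := huA t2 ht2
    have ht2tb : t2 < tb := hAB t2 ht2 tb htb
    have hwu : u < w := by
      by_contra hcon
      have hne : w ≠ u := fun h => hP12 u hu (h ▸ hw)
      have : w < u := by omega
      exact hnc this hut2 ht2tb hEw hEub
    have hwtb : w < tb := by
      by_contra hcon
      have hne : w ≠ tb := fun h => hBP2 tb htb (h ▸ hw)
      have : tb < w := by omega
      exact hnc hut2 ht2tb this hEub (hsym hEw)
    have htbp2 : tb < p2 := (hBin tb htb).2
    obtain ⟨e, he, f, hf, hef, h1, h2⟩ :=
      njump hP2 hw hp2 hwtb htbp2 (fun h => hBP2 tb htb h)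
    have huout : u < e ∨ f < u := by
      rcases ndichot hsym hnc hP1 hef (by omega) (fun h => hP12 e h he)
        (fun h => hP12 f h hf) with h | h
      · exfalso
        have h1' := (h p1 hp1).1
        have h2' := hP2gt e he
        omega
      · exact h u hu
    rcases huout with h | h
    · exact hnc h h1 h2 hEub hef
    · exact hnc h1 h2 h hef (hsym hEub)
  rcases hblk with h | h
  · exact fin Q2 Q3 hQ2 hmQ2 hmQ3 (fun a ha h' => hP1Q2 a h' ha) (fun a ha h' => hP2Q2 a h' ha)
      (fun a ha h' => hP1Q3 a h' ha) (fun a ha h' => hP2Q3 a h' ha) hQ2in hQ3in h h13 h22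
  · exact fin Q3 Q2 hQ3 hmQ3 hmQ2 (fun a ha h' => hP1Q3 a h' ha) (fun a ha h' => hP2Q3 a h' ha)
      (fun a ha h' => hP1Q2 a h' ha) (fun a ha h' => hP2Q2 a h' ha) hQ3in hQ2in h h12 h23

lemma nwcore {P1 P2 Q2 Q3 : Set ℕ}
    (hP1 : NConn E P1) (hP2 : NConn E P2) (hQ2 : NConn E Q2) (hQ3 : NConn E Q3)
    (hP12 : ∀ a ∈ P1, a ∉ P2) (hP1Q2 : ∀ a ∈ P1, a ∉ Q2) (hP1Q3 : ∀ a ∈ P1, a ∉ Q3)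
    (hP2Q2 : ∀ a ∈ P2, a ∉ Q2) (hP2Q3 : ∀ a ∈ P2, a ∉ Q3) (hQ23 : ∀ a ∈ Q2, a ∉ Q3)
    (h12 : ∃ a ∈ P1, ∃ b ∈ Q2, E a b) (h13 : ∃ a ∈ P1, ∃ b ∈ Q3, E a b)
    (h22 : ∃ a ∈ P2, ∃ b ∈ Q2, E a b) (h23 : ∃ a ∈ P2, ∃ b ∈ Q3, E a b)
    {p1 p2 : ℕ} (hp1 : p1 ∈ P1) (hp2 : p2 ∈ P2)
    (hexp1 : ∀ e f, e ∈ P1 ∪ P2 ∪ Q2 ∪ Q3 → f ∈ P1 ∪ P2 ∪ Q2 ∪ Q3 → E e f →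
      ¬(e < p1 ∧ p1 < f))
    (hexp2 : ∀ e f, e ∈ P1 ∪ P2 ∪ Q2 ∪ Q3 → f ∈ P1 ∪ P2 ∪ Q2 ∪ Q3 → E e f →
      ¬(e < p2 ∧ p2 < f)) : False := by
  have hmem : ∀ a, a ∈ P2 ∪ P1 ∪ Q2 ∪ Q3 → a ∈ P1 ∪ P2 ∪ Q2 ∪ Q3 := by
    rintro a (((h | h) | h) | h)
    · exact Or.inl (Or.inl (Or.inr h))
    · exact Or.inl (Or.inl (Or.inl h))
    · exact Or.inl (Or.inr h)
    · exact Or.inr h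
  have hne : p1 ≠ p2 := fun h => hP12 p1 hp1 (h ▸ hp2)
  rcases lt_or_gt_of_ne hne with h | h
  · exact nwcoreAux hsym hnc hP1 hP2 hQ2 hQ3 hP12 hP1Q2 hP1Q3 hP2Q2 hP2Q3 hQ23
      h12 h13 h22 h23 hp1 hp2 hexp1 hexp2 h
  · exact nwcoreAux hsym hnc hP2 hP1 hQ2 hQ3 (fun a ha h' => hP12 a h' ha)
      hP2Q2 hP2Q3 hP1Q2 hP1Q3 hQ23 h22 h23 h12 h13 hp2 hp1
      (fun e f he hf hef hc => hexp2 e f (hmem e he) (hmem f hf) hef hc)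
      (fun e f he hf hef hc => hexp1 e f (hmem e he) (hmem f hf) hef hc) h

lemma nk23 {P1 P2 Q1 Q2 Q3 : Set ℕ}
    (hP1 : NConn E P1) (hP2 : NConn E P2) (hQ1 : NConn E Q1) (hQ2 : NConn E Q2)
    (hQ3 : NConn E Q3)
    (dPP : ∀ a ∈ P1, a ∉ P2)
    (dP1Q1 : ∀ a ∈ P1, a ∉ Q1) (dP1Q2 : ∀ a ∈ P1, a ∉ Q2) (dP1Q3 : ∀ a ∈ P1, a ∉ Q3)
    (dP2Q1 : ∀ a ∈ P2, a ∉ Q1) (dP2Q2 : ∀ a ∈ P2, a ∉ Q2) (dP2Q3 : ∀ a ∈ P2, a ∉ Q3)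
    (dQ12 : ∀ a ∈ Q1, a ∉ Q2) (dQ13 : ∀ a ∈ Q1, a ∉ Q3) (dQ23 : ∀ a ∈ Q2, a ∉ Q3)
    (h11 : ∃ a ∈ P1, ∃ b ∈ Q1, E a b) (h12 : ∃ a ∈ P1, ∃ b ∈ Q2, E a b)
    (h13 : ∃ a ∈ P1, ∃ b ∈ Q3, E a b)
    (h21 : ∃ a ∈ P2, ∃ b ∈ Q1, E a b) (h22 : ∃ a ∈ P2, ∃ b ∈ Q2, E a b)
    (h23 : ∃ a ∈ P2, ∃ b ∈ Q3, E a b) : False := by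
  classical
  set S : Set ℕ := P1 ∪ P2 ∪ Q1 ∪ Q2 ∪ Q3 with hS
  have hmP1 : ∀ a ∈ P1, a ∈ S := fun a ha => Or.inl (Or.inl (Or.inl (Or.inl ha)))
  have hmP2 : ∀ a ∈ P2, a ∈ S := fun a ha => Or.inl (Or.inl (Or.inl (Or.inr ha)))
  have hmQ1 : ∀ a ∈ Q1, a ∈ S := fun a ha => Or.inl (Or.inl (Or.inr ha))
  have hmQ2 : ∀ a ∈ Q2, a ∈ S := fun a ha => Or.inl (Or.inr ha)
  have hmQ3 : ∀ a ∈ Q3, a ∈ S := fun a ha => Or.inr ha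
  obtain ⟨a0, ha0, -⟩ := id h11
  have hSne : S.Nonempty := ⟨a0, hmP1 a0 ha0⟩
  set α := sInf S with hα
  have hαS : α ∈ S := Nat.sInf_mem hSne
  have hαle : ∀ a ∈ S, α ≤ a := fun a ha => Nat.sInf_le ha
  have pcase : ∀ (PA PB : Set ℕ), NConn E PA → NConn E PB →
      (∀ a ∈ PB ∪ Q1 ∪ Q2 ∪ Q3, a ∉ PA) →
      (∀ a ∈ PB, a ∈ S) →
      (∀ a ∈ PB, a ∉ Q1) → (∀ a ∈ PB, a ∉ Q2) → (∀ a ∈ PB, a ∉ Q3) →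
      (∃ a ∈ PA, ∃ b ∈ Q1, E a b) → (∃ a ∈ PA, ∃ b ∈ Q2, E a b) →
      (∃ a ∈ PA, ∃ b ∈ Q3, E a b) →
      (∃ a ∈ PB, ∃ b ∈ Q1, E a b) → (∃ a ∈ PB, ∃ b ∈ Q2, E a b) →
      (∃ a ∈ PB, ∃ b ∈ Q3, E a b) →
      α ∈ PA → False := by
    intro PA PB hPA hPB hdisj hsubB dB1 dB2 dB3 e1 e2 e3 f1 f2 f3 hαA
    have hmm : ∀ a ∈ PB ∪ Q1 ∪ Q2 ∪ Q3, a ∈ S := by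
      rintro a (((h | h) | h) | h)
      · exact hsubB a h
      · exact hmQ1 a h
      · exact hmQ2 a h
      · exact hmQ3 a h
    have hlt : ∀ a ∈ PB ∪ Q1 ∪ Q2 ∪ Q3, α < a := fun a ha =>
      lt_of_le_of_ne (hαle a (hmm a ha)) (fun h => hdisj a ha (h ▸ hαA))
    have hPAout : ∀ e f, e ∈ PB ∪ Q1 ∪ Q2 ∪ Q3 → f ∈ PB ∪ Q1 ∪ Q2 ∪ Q3 → E e f →
        e < f → ∀ a ∈ PA, a < e ∨ f < a := by
      intro e f he hf hef hlt' a ha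
      rcases ndichot hsym hnc hPA hef hlt' (hdisj e he) (hdisj f hf) with h | h
      · exfalso
        have h1 := (h α hαA).1
        have h2 := hlt e he
        omega
      · exact h a ha
    have hexp : ∀ (Q : Set ℕ), (∃ a ∈ PA, ∃ b ∈ Q, E a b) →
        ∃ m' ∈ Q, ∀ e f, e ∈ PB ∪ Q1 ∪ Q2 ∪ Q3 → f ∈ PB ∪ Q1 ∪ Q2 ∪ Q3 → E e f →
          ¬(e < m' ∧ m' < f) := by
      intro Q hE
      obtain ⟨ai, hai, mi, hmi, hEi⟩ := hE
      refine ⟨mi, hmi, ?_⟩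
      rintro e f he hf hef ⟨hl1, hl2⟩
      rcases hPAout e f he hf hef (by omega) ai hai with h | h
      · exact hnc h hl1 hl2 hEi hef
      · exact hnc hl1 hl2 h hef (hsym hEi)
    obtain ⟨m1, hm1, hexp1⟩ := hexp Q1 e1
    obtain ⟨m2, hm2, hexp2⟩ := hexp Q2 e2
    obtain ⟨m3, hm3, hexp3⟩ := hexp Q3 e3
    exact nrcore hsym hnc hPB hQ1 hQ2 hQ3 dB1 dB2 dB3 dQ12 dQ13 dQ23 f1 f2 f3
      hm1 hm2 hm3 hexp1 hexp2 hexp3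
  have wrapcase : ∀ (QA QB QC : Set ℕ), NConn E QA → NConn E QB → NConn E QC →
      (∀ a ∈ P1 ∪ P2 ∪ QB ∪ QC, a ∉ QA) →
      (∀ a ∈ QB, a ∈ S) → (∀ a ∈ QC, a ∈ S) →
      (∀ a ∈ P1, a ∉ QB) → (∀ a ∈ P1, a ∉ QC) →
      (∀ a ∈ P2, a ∉ QB) → (∀ a ∈ P2, a ∉ QC) → (∀ a ∈ QB, a ∉ QC) →
      (∃ a ∈ P1, ∃ b ∈ QA, E a b) → (∃ a ∈ P2, ∃ b ∈ QA, E a b) →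
      (∃ a ∈ P1, ∃ b ∈ QB, E a b) → (∃ a ∈ P1, ∃ b ∈ QC, E a b) →
      (∃ a ∈ P2, ∃ b ∈ QB, E a b) → (∃ a ∈ P2, ∃ b ∈ QC, E a b) →
      α ∈ QA → False := by
    intro QA QB QC hQA hQB hQC hdisj hsubB hsubC d1B d1C d2B d2C dBC eA1 eA2 eB1 eC1
      eB2 eC2 hαA
    have hmm : ∀ a ∈ P1 ∪ P2 ∪ QB ∪ QC, a ∈ S := by
      rintro a (((h | h) | h) | h)
      · exact hmP1 a h
      · exact hmP2 a h
      · exact hsubB a h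
      · exact hsubC a h
    have hlt : ∀ a ∈ P1 ∪ P2 ∪ QB ∪ QC, α < a := fun a ha =>
      lt_of_le_of_ne (hαle a (hmm a ha)) (fun h => hdisj a ha (h ▸ hαA))
    have hQAout : ∀ e f, e ∈ P1 ∪ P2 ∪ QB ∪ QC → f ∈ P1 ∪ P2 ∪ QB ∪ QC → E e f →
        e < f → ∀ a ∈ QA, a < e ∨ f < a := by
      intro e f he hf hef hlt' a ha
      rcases ndichot hsym hnc hQA hef hlt' (hdisj e he) (hdisj f hf) with h | h
      · exfalso
        have h1 := (h α hαA).1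
        have h2 := hlt e he
        omega
      · exact h a ha
    have hexp : ∀ (P : Set ℕ), (∃ a ∈ P, ∃ b ∈ QA, E a b) →
        ∃ p ∈ P, ∀ e f, e ∈ P1 ∪ P2 ∪ QB ∪ QC → f ∈ P1 ∪ P2 ∪ QB ∪ QC → E e f →
          ¬(e < p ∧ p < f) := by
      intro P hE
      obtain ⟨pi, hpi, mi, hmi, hEi⟩ := hE
      refine ⟨pi, hpi, ?_⟩
      rintro e f he hf hef ⟨hl1, hl2⟩
      rcases hQAout e f he hf hef (by omega) mi hmi with h | h
      · exact hnc h hl1 hl2 (hsym hEi) hef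
      · exact hnc hl1 hl2 h hef hEi
    obtain ⟨p1, hp1, hexp1⟩ := hexp P1 eA1
    obtain ⟨p2, hp2, hexp2⟩ := hexp P2 eA2
    exact nwcore hsym hnc hP1 hP2 hQB hQC dPP d1B d1C d2B d2C dBC
      eB1 eC1 eB2 eC2 hp1 hp2 hexp1 hexp2
  rcases hαS with ((((h | h) | h) | h) | h)
  · refine pcase P1 P2 hP1 hP2 ?_ hmP2 dP2Q1 dP2Q2 dP2Q3 h11 h12 h13 h21 h22 h23 h
    rintro a (((ha | ha) | ha) | ha) hb
    · exact dPP a hb ha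
    · exact dP1Q1 a hb ha
    · exact dP1Q2 a hb ha
    · exact dP1Q3 a hb ha
  · refine pcase P2 P1 hP2 hP1 ?_ hmP1 dP1Q1 dP1Q2 dP1Q3 h21 h22 h23 h11 h12 h13 h
    rintro a (((ha | ha) | ha) | ha) hb
    · exact dPP a ha hb
    · exact dP2Q1 a hb ha
    · exact dP2Q2 a hb ha
    · exact dP2Q3 a hb ha
  · refine wrapcase Q1 Q2 Q3 hQ1 hQ2 hQ3 ?_ hmQ2 hmQ3 dP1Q2 dP1Q3 dP2Q2 dP2Q3 dQ23
      h11 h21 h12 h13 h22 h23 h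
    rintro a (((ha | ha) | ha) | ha) hb
    · exact dP1Q1 a ha hb
    · exact dP2Q1 a ha hb
    · exact dQ12 a hb ha
    · exact dQ13 a hb ha
  · refine wrapcase Q2 Q1 Q3 hQ2 hQ1 hQ3 ?_ hmQ1 hmQ3 dP1Q1 dP1Q3 dP2Q1 dP2Q3 dQ13
      h12 h22 h11 h13 h21 h23 h
    rintro a (((ha | ha) | ha) | ha) hb
    · exact dP1Q2 a ha hb
    · exact dP2Q2 a ha hb
    · exact dQ12 a ha hb
    · exact dQ23 a hb ha
  · refine wrapcase Q3 Q1 Q2 hQ3 hQ1 hQ2 ?_ hmQ1 hmQ2 dP1Q1 dP1Q2 dP2Q1 dP2Q2 dQ12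
      h13 h23 h11 h12 h21 h22 h
    rintro a (((ha | ha) | ha) | ha) hb
    · exact dP1Q3 a ha hb
    · exact dP2Q3 a ha hb
    · exact dQ13 a ha hb
    · exact dQ23 a ha hb

end NAbstract

section Transfer

variable {U : Type*}

/-- The edge relation on indices induced by a listing. -/
def LE' (F : SimpleGraph U) (l : List U) (i j : ℕ) : Prop :=
  ∃ (hi : i < l.length) (hj : j < l.length), F.Adj (l.get ⟨i, hi⟩) (l.get ⟨j, hj⟩)

/-- The index set of a vertex set with respect to a listing. -/
def idxS (l : List U) (S : Set U) : Set ℕ :=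
  {i | ∃ h : i < l.length, l.get ⟨i, h⟩ ∈ S}

lemma le'_symm {F : SimpleGraph U} {l : List U} {a b : ℕ} (h : LE' F l a b) : LE' F l b a := by
  obtain ⟨hi, hj, h⟩ := h
  exact ⟨hj, hi, h.symm⟩

lemma le'_noncross {F : SimpleGraph U} {l : List U} (hOL : OuterListing F l) :
    ∀ {i k j m : ℕ}, i < k → k < j → j < m → LE' F l i j → LE' F l k m → False := by
  intro i k j m h1 h2 h3 hij hkm
  obtain ⟨hi, hj, hadj1⟩ := hij
  obtain ⟨hk, hm, hadj2⟩ := hkm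
  exact hOL.2.2 i k j m h1 h2 h3 hm ⟨hadj1, hadj2⟩

lemma idx_conn {F : SimpleGraph U} {l : List U} (hnd : l.Nodup) {S : Set U}
    (hS : VConn F S) (hsub : ∀ v ∈ S, v ∈ l) : NConn (LE' F l) (idxS l S) := by
  have key : ∀ u v, ReflTransGen (VStep F S) u v →
      ∀ i (hi : i < l.length), l.get ⟨i, hi⟩ = u →
      ∀ j (hj : j < l.length), l.get ⟨j, hj⟩ = v →
      ReflTransGen (NStep (LE' F l) (idxS l S)) i j := by
    intro u v h
    induction h with
    | refl =>
      intro i hi hgi j hj hgj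
      have : (⟨i, hi⟩ : Fin l.length) = ⟨j, hj⟩ :=
        List.nodup_iff_injective_get.mp hnd (hgi.trans hgj.symm)
      have : i = j := by simpa using this
      subst this
      exact .refl
    | @tail b c h1 h2 ih =>
      intro i hi hgi j hj hgj
      obtain ⟨⟨kb, hkb⟩, hgb⟩ := List.mem_iff_get.mp (hsub b h2.1)
      refine (ih i hi hgi kb hkb hgb).tail ?_
      exact ⟨⟨hkb, hgb ▸ h2.1⟩, ⟨hj, hgj ▸ h2.2.1⟩, ⟨hkb, hj, by rw [hgb, hgj]; exact h2.2.2⟩⟩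
  rintro i ⟨hi, hgi⟩ j ⟨hj, hgj⟩
  exact key _ _ (hS.2 _ hgi _ hgj) i hi rfl j hj rfl

lemma idx_disj {l : List U} {S T : Set U} (h : ∀ v ∈ S, v ∉ T) :
    ∀ a ∈ idxS l S, a ∉ idxS l T := by
  rintro a ⟨ha, hga⟩ ⟨hb, hgb⟩
  exact h _ hga hgb

lemma idx_edge {F : SimpleGraph U} {l : List U} {S T : Set U}
    (hsubS : ∀ v ∈ S, v ∈ l) (hsubT : ∀ v ∈ T, v ∈ l)
    (h : ∃ u ∈ S, ∃ v ∈ T, F.Adj u v) :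
    ∃ a ∈ idxS l S, ∃ b ∈ idxS l T, LE' F l a b := by
  obtain ⟨u, hu, v, hv, hadj⟩ := h
  obtain ⟨⟨a, ha⟩, hga⟩ := List.mem_iff_get.mp (hsubS u hu)
  obtain ⟨⟨b, hb⟩, hgb⟩ := List.mem_iff_get.mp (hsubT v hv)
  exact ⟨a, ⟨ha, hga ▸ hu⟩, b, ⟨hb, hgb ▸ hv⟩, ⟨ha, hb, by rw [hga, hgb]; exact hadj⟩⟩

/-- Vertex-level K₂,₃-freeness of outer-listed graphs. -/
lemma vk23 {F : SimpleGraph U} {l : List U} (hOL : OuterListing F l)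
    {P1 P2 Q1 Q2 Q3 : Set U}
    (sP1 : ∀ v ∈ P1, v ∈ l) (sP2 : ∀ v ∈ P2, v ∈ l) (sQ1 : ∀ v ∈ Q1, v ∈ l)
    (sQ2 : ∀ v ∈ Q2, v ∈ l) (sQ3 : ∀ v ∈ Q3, v ∈ l)
    (cP1 : VConn F P1) (cP2 : VConn F P2) (cQ1 : VConn F Q1) (cQ2 : VConn F Q2)
    (cQ3 : VConn F Q3)
    (dPP : ∀ v ∈ P1, v ∉ P2)
    (dP1Q1 : ∀ v ∈ P1, v ∉ Q1) (dP1Q2 : ∀ v ∈ P1, v ∉ Q2) (dP1Q3 : ∀ v ∈ P1, v ∉ Q3)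
    (dP2Q1 : ∀ v ∈ P2, v ∉ Q1) (dP2Q2 : ∀ v ∈ P2, v ∉ Q2) (dP2Q3 : ∀ v ∈ P2, v ∉ Q3)
    (dQ12 : ∀ v ∈ Q1, v ∉ Q2) (dQ13 : ∀ v ∈ Q1, v ∉ Q3) (dQ23 : ∀ v ∈ Q2, v ∉ Q3)
    (h11 : ∃ u ∈ P1, ∃ v ∈ Q1, F.Adj u v) (h12 : ∃ u ∈ P1, ∃ v ∈ Q2, F.Adj u v)
    (h13 : ∃ u ∈ P1, ∃ v ∈ Q3, F.Adj u v)
    (h21 : ∃ u ∈ P2, ∃ v ∈ Q1, F.Adj u v) (h22 : ∃ u ∈ P2, ∃ v ∈ Q2, F.Adj u v)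
    (h23 : ∃ u ∈ P2, ∃ v ∈ Q3, F.Adj u v) : False := by
  have hnd := hOL.1
  exact nk23 (E := LE' F l) (fun {a b} h => le'_symm h) (fun {i k j m} h1 h2 h3 h4 h5 =>
      le'_noncross hOL h1 h2 h3 h4 h5)
    (idx_conn hnd cP1 sP1) (idx_conn hnd cP2 sP2) (idx_conn hnd cQ1 sQ1)
    (idx_conn hnd cQ2 sQ2) (idx_conn hnd cQ3 sQ3)
    (idx_disj dPP) (idx_disj dP1Q1) (idx_disj dP1Q2) (idx_disj dP1Q3)
    (idx_disj dP2Q1) (idx_disj dP2Q2) (idx_disj dP2Q3)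
    (idx_disj dQ12) (idx_disj dQ13) (idx_disj dQ23)
    (idx_edge sP1 sQ1 h11) (idx_edge sP1 sQ2 h12) (idx_edge sP1 sQ3 h13)
    (idx_edge sP2 sQ1 h21) (idx_edge sP2 sQ2 h22) (idx_edge sP2 sQ3 h23)

/-- Vertex-level version of the outer path lemma: the head-set and last-set cannot be
joined by two disjoint connected middles. -/
lemma vopgen {F : SimpleGraph U} {l : List U} (hOL : OuterListing F l)
    {R1 R2 S1 S2 : Set U}
    (sR1 : ∀ v ∈ R1, v ∈ l) (sR2 : ∀ v ∈ R2, v ∈ l) (sS1 : ∀ v ∈ S1, v ∈ l)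
    (sS2 : ∀ v ∈ S2, v ∈ l)
    (cR1 : VConn F R1) (cR2 : VConn F R2) (cS1 : VConn F S1) (cS2 : VConn F S2)
    (dR12 : ∀ v ∈ R1, v ∉ R2) (dR1S1 : ∀ v ∈ R1, v ∉ S1) (dR1S2 : ∀ v ∈ R1, v ∉ S2)
    (dR2S1 : ∀ v ∈ R2, v ∉ S1) (dR2S2 : ∀ v ∈ R2, v ∉ S2) (dS12 : ∀ v ∈ S1, v ∉ S2)
    (h0 : 0 < l.length)
    (hx : l.get ⟨0, h0⟩ ∈ R1) (hy : l.get ⟨l.length - 1, by omega⟩ ∈ R2)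
    (h11 : ∃ u ∈ S1, ∃ v ∈ R1, F.Adj u v) (h12 : ∃ u ∈ S1, ∃ v ∈ R2, F.Adj u v)
    (h21 : ∃ u ∈ S2, ∃ v ∈ R1, F.Adj u v) (h22 : ∃ u ∈ S2, ∃ v ∈ R2, F.Adj u v) : False := by
  have hnd := hOL.1
  have hbd : ∀ T : Set U, ∀ a ∈ idxS l T, a < l.length := by
    rintro T a ⟨ha, -⟩; exact ha
  refine nopgen (E := LE' F l) (fun {a b} h => le'_symm h) (fun {i k j m} h1 h2 h3 h4 h5 =>
      le'_noncross hOL h1 h2 h3 h4 h5)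
    (idx_conn hnd cR1 sR1) (idx_conn hnd cR2 sR2) (idx_conn hnd cS1 sS1)
    (idx_conn hnd cS2 sS2)
    (idx_disj dR12) (idx_disj dR1S1) (idx_disj dR1S2) (idx_disj dR2S1) (idx_disj dR2S2)
    (idx_disj dS12)
    (α := 0) (ω := l.length - 1) ⟨h0, hx⟩ ⟨by omega, hy⟩ ?_ ?_
    (idx_edge sS1 sR1 h11) (idx_edge sS1 sR2 h12) (idx_edge sS2 sR1 h21)
    (idx_edge sS2 sR2 h22)
  · intro a _; omega
  · rintro a (((ha | ha) | ha) | ha)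
    · have := hbd R1 a ha; omega
    · have := hbd R2 a ha; omega
    · have := hbd S1 a ha; omega
    · have := hbd S2 a ha; omega

end Transfer


section ListHelpers
variable {U : Type*}

lemma head?_get {l : List U} {x : U} (h : l.head? = some x) (h0 : 0 < l.length) :
    l.get ⟨0, h0⟩ = x := by
  cases l with
  | nil => simp at h0
  | cons a t => simpa using h

lemma getLast?_get {l : List U} {y : U} (h : l.getLast? = some y) (h0 : 0 < l.length) :
    l.get ⟨l.length - 1, by omega⟩ = y := by
  have hne : l ≠ [] := by
    intro h'
    subst h'
    simp at h0
  rw [List.getLast?_eq_getLast hne] at h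
  have h2 := List.getLast_eq_getElem hne
  simp only [List.get_eq_getElem]
  rw [← Option.some_inj.mp h, h2]

lemma addEdge_adj {F : SimpleGraph U} {x y u v : U} :
    (AddEdge F x y).Adj u v ↔ F.Adj u v ∨ (u ≠ v ∧ ((u = x ∧ v = y) ∨ (v = x ∧ u = y))) := by
  unfold AddEdge
  rw [SimpleGraph.sup_adj, SimpleGraph.fromRel_adj]

lemma outerListing_addEdge {F : SimpleGraph U} {l : List U} {x y : U}
    (hOL : OuterListing F l)
    (hhead : l.head? = some x) (hlast : l.getLast? = some y) :
    OuterListing (AddEdge F x y) l := by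
  obtain ⟨hnd, hch, hnc⟩ := hOL
  refine ⟨hnd, hch.imp (fun {a b} h => addEdge_adj.mpr (Or.inl h)), ?_⟩
  intro i k j m h1 h2 h3 hm hcon
  obtain ⟨hij, hkm⟩ := hcon
  have hinj := List.nodup_iff_injective_get.mp hnd
  have hlen : 0 < l.length := by omega
  have hx0 := head?_get hhead hlen
  have hyl := getLast?_get hlast hlen
  have hpinx : ∀ (a : ℕ) (ha : a < l.length), l.get ⟨a, ha⟩ = x → a = 0 := by
    intro a ha hga
    have h' : (⟨a, ha⟩ : Fin l.length) = ⟨0, hlen⟩ := hinj (by rw [hga, hx0])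
    simpa using h'
  have hpiny : ∀ (a : ℕ) (ha : a < l.length), l.get ⟨a, ha⟩ = y → a = l.length - 1 := by
    intro a ha hga
    have h' : (⟨a, ha⟩ : Fin l.length) = ⟨l.length - 1, by omega⟩ := hinj (by rw [hga, hyl])
    simpa using h'
  rw [addEdge_adj] at hij hkm
  rcases hkm with hkm | ⟨-, (⟨hk1, -⟩ | ⟨-, hk2⟩)⟩
  · rcases hij with hij | ⟨-, (⟨-, hj1⟩ | ⟨hj2, -⟩)⟩
    · exact hnc i k j m h1 h2 h3 hm ⟨hij, hkm⟩
    · have := hpiny j (by omega) hj1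
      omega
    · have := hpinx j (by omega) hj2
      omega
  · have := hpinx k (by omega) hk1
    omega
  · have := hpiny k (by omega) hk2
    omega

lemma listRTG {F : SimpleGraph U} {l : List U} {S : Set U}
    (hch : ∀ (i : ℕ) (h : i < l.length - 1),
      F.Adj (l.get ⟨i, by omega⟩) (l.get ⟨i + 1, by omega⟩))
    {i j : ℕ} (hij : i ≤ j) (hj : j < l.length)
    (hmem : ∀ k (hk : k < l.length), i ≤ k → k ≤ j → l.get ⟨k, hk⟩ ∈ S) :
    ReflTransGen (VStep F S) (l.get ⟨i, by omega⟩) (l.get ⟨j, hj⟩) := by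
  revert hj hmem
  induction j, hij using Nat.le_induction with
  | base =>
    intro hj hmem
    exact .refl
  | succ j hij ih =>
    intro hj hmem
    have hj' : j < l.length := by omega
    refine (ih hj' ?_).tail ?_
    · intro k hk hk1 hk2
      exact hmem k hk hk1 (by omega)
    · exact ⟨hmem j hj' hij (by omega), hmem (j + 1) hj (by omega) (by omega),
        hch j (by omega)⟩

lemma get_congr {l : List U} {i j : ℕ} (h : i = j) (hi : i < l.length)
    (hj : j < l.length) : l.get ⟨i, hi⟩ = l.get ⟨j, hj⟩ := by subst h; rfl

end ListHelpers


section MainLemma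

variable {U : Type*} [Fintype U]

/-- Basic facts extracted from the hypotheses. -/
lemma basic_facts (G J : (⊤ : SimpleGraph U).Subgraph) (z x y : U)
    (hz : z ∈ G.verts) (hxy : x ≠ y) (hdeg : G.neighborSet z = {x, y})
    (hJG : J.verts ∩ G.verts = {x, y}) :
    G.Adj z x ∧ G.Adj z y ∧ (∀ v, G.Adj z v → v = x ∨ v = y) ∧ z ≠ x ∧ z ≠ y ∧
      x ∈ G.verts ∧ y ∈ G.verts ∧ x ∈ J.verts ∧ y ∈ J.verts ∧ z ∉ J.verts := by
  have hxm : x ∈ G.neighborSet z := by rw [hdeg]; left; rfl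
  have hym : y ∈ G.neighborSet z := by rw [hdeg]; right; rfl
  have hGzx : G.Adj z x := hxm
  have hGzy : G.Adj z y := hym
  have hzadj : ∀ v, G.Adj z v → v = x ∨ v = y := by
    intro v hv
    have : v ∈ G.neighborSet z := hv
    rw [hdeg] at this
    exact this
  have hzx : z ≠ x := hGzx.ne
  have hzy : z ≠ y := hGzy.ne
  have hxG : x ∈ G.verts := by
    have : x ∈ J.verts ∩ G.verts := by rw [hJG]; left; rfl
    exact this.2
  have hyG : y ∈ G.verts := by
    have : y ∈ J.verts ∩ G.verts := by rw [hJG]; right; rfl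
    exact this.2
  have hxJ : x ∈ J.verts := by
    have : x ∈ J.verts ∩ G.verts := by rw [hJG]; left; rfl
    exact this.1
  have hyJ : y ∈ J.verts := by
    have : y ∈ J.verts ∩ G.verts := by rw [hJG]; right; rfl
    exact this.1
  have hzJ : z ∉ J.verts := by
    intro hzJ'
    have : z ∈ J.verts ∩ G.verts := ⟨hzJ', hz⟩
    rw [hJG] at this
    rcases this with h | h
    · exact hzx h
    · exact hzy h
  exact ⟨hGzx, hGzy, hzadj, hzx, hzy, hxG, hyG, hxJ, hyJ, hzJ⟩

lemma kbip_exists_adj (t : ℕ) (ht : 3 ≤ t) (w : Fin 2 ⊕ Fin t) :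
    ∃ w', (completeBipartiteGraph (Fin 2) (Fin t)).Adj w w' := by
  cases w with
  | inl i => exact ⟨Sum.inr ⟨0, by omega⟩, by simp⟩
  | inr j => exact ⟨Sum.inl 0, by simp⟩

lemma kbip_adj_cases {t : ℕ} {w w' : Fin 2 ⊕ Fin t}
    (h : (completeBipartiteGraph (Fin 2) (Fin t)).Adj w w') :
    (∃ i j, w = Sum.inl i ∧ w' = Sum.inr j) ∨ (∃ i j, w = Sum.inr j ∧ w' = Sum.inl i) := by
  cases w with
  | inl i =>
    cases w' with
    | inl i' => simp at h
    | inr j => exact Or.inl ⟨i, j, rfl, rfl⟩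
  | inr j =>
    cases w' with
    | inl i' => exact Or.inr ⟨i', j, rfl, rfl⟩
    | inr j' => simp at h

lemma kbip_adj_lr {t : ℕ} (i : Fin 2) (j : Fin t) :
    (completeBipartiteGraph (Fin 2) (Fin t)).Adj (Sum.inl i) (Sum.inr j) := by simp

/-- Direction 1: a `K_{2,t}` minor of `G` yields one of `(G − z) ∪ J`. -/
lemma dir1 (t : ℕ) (ht : 3 ≤ t)
    (G J : (⊤ : SimpleGraph U).Subgraph) (z x y : U)
    (hz : z ∈ G.verts) (hxy : x ≠ y) (hdeg : G.neighborSet z = {x, y})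
    (hJG : J.verts ∩ G.verts = {x, y}) (hJ3 : 3 ≤ J.verts.ncard)
    (hJop : XYOuterplanar J.spanningCoe J.verts x y) :
    IsMinor (completeBipartiteGraph (Fin 2) (Fin t)) G.spanningCoe →
    IsMinor (completeBipartiteGraph (Fin 2) (Fin t))
      ((G.deleteVerts {z}) ⊔ J).spanningCoe := by
  classical
  obtain ⟨hGzx, hGzy, hzadj, hzx, hzy, hxG, hyG, hxJ, hyJ, hzJ⟩ :=
    basic_facts G J z x y hz hxy hdeg hJG
  obtain ⟨l, hcov, hhead, hlast, hOL⟩ := hJop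
  obtain ⟨hnd, hch, hncr⟩ := hOL
  set n := l.length with hn
  have hset : J.verts = (l.toFinset : Set U) := by
    ext v
    rw [List.coe_toFinset]
    exact (hcov v).symm
  have hlen : 3 ≤ n := by
    have : J.verts.ncard = n := by
      rw [hset, Set.ncard_coe_finset, List.toFinset_card_of_nodup hnd]
    omega
  have h0n : 0 < n := by omega
  have hinj := List.nodup_iff_injective_get.mp hnd
  have hx0 : l.get ⟨0, h0n⟩ = x := head?_get hhead h0n
  have hyl : l.get ⟨n - 1, by omega⟩ = y := getLast?_get hlast h0n
  have hgx : ∀ (h : 0 < l.length), l.get ⟨0, h⟩ = x := fun _ => hx0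
  have hgy : ∀ (h : n - 1 < l.length), l.get ⟨n - 1, h⟩ = y := fun _ => hyl
  have hgetJ : ∀ (k : ℕ) (hk : k < n), l.get ⟨k, hk⟩ ∈ J.verts :=
    fun k hk => (hcov _).mp (l.get_mem ⟨k, hk⟩)
  set Iset : Set U := J.verts \ {x, y} with hIdef
  have hgetI : ∀ (k : ℕ) (hk : k < n), 1 ≤ k → k ≤ n - 2 → l.get ⟨k, hk⟩ ∈ Iset := by
    intro k hk h1 h2
    refine ⟨hgetJ k hk, ?_⟩
    intro hmem
    simp only [Set.mem_insert_iff, Set.mem_singleton_iff] at hmem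
    rcases hmem with h | h
    · have h' : (⟨k, hk⟩ : Fin l.length) = ⟨0, h0n⟩ := hinj (by rw [h, hx0])
      have : k = 0 := by simpa using h'
      omega
    · have h' : (⟨k, hk⟩ : Fin l.length) = ⟨n - 1, by omega⟩ := hinj (by rw [h, hgy])
      have : k = n - 1 := by simpa using h'
      omega
  have hIget : ∀ v ∈ Iset, ∃ (k : ℕ) (hk : k < n), 1 ≤ k ∧ k ≤ n - 2 ∧ l.get ⟨k, hk⟩ = v := by
    intro v hv
    obtain ⟨⟨k, hk⟩, hg⟩ := List.mem_iff_get.mp ((hcov v).mpr hv.1)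
    refine ⟨k, hk, ?_, ?_, hg⟩
    · rcases Nat.eq_zero_or_pos k with h | h
      · exfalso
        apply hv.2
        left
        subst h
        rw [← hg]
        exact hgx hk
      · exact h
    · by_contra hcon
      have hk1 : k = n - 1 := by omega
      apply hv.2
      right
      subst hk1
      rw [← hg]
      exact hgy hk
  have hIx : ∀ v ∈ Iset, v ≠ x := fun v hv h => hv.2 (Or.inl h)
  have hIy : ∀ v ∈ Iset, v ≠ y := fun v hv h => hv.2 (Or.inr h)
  have hIG : ∀ v ∈ Iset, v ∉ G.verts := by
    intro v hv hvG
    have : v ∈ J.verts ∩ G.verts := ⟨hv.1, hvG⟩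
    rw [hJG] at this
    exact hv.2 this
  have hIz : z ∉ Iset := fun h => hzJ h.1
  -- H' adjacency helpers
  set H' := ((G.deleteVerts {z}) ⊔ J).spanningCoe with hH'
  have hH'J : ∀ {u v : U}, J.Adj u v → H'.Adj u v := by
    intro u v h
    exact SimpleGraph.Subgraph.sup_adj.mpr (Or.inr h)
  have hH'G : ∀ {u v : U}, G.Adj u v → u ≠ z → v ≠ z → H'.Adj u v := by
    intro u v h hu hv
    refine SimpleGraph.Subgraph.sup_adj.mpr (Or.inl ?_)
    exact SimpleGraph.Subgraph.deleteVerts_adj.mpr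
      ⟨h.fst_mem, by simpa using hu, h.snd_mem, by simpa using hv, h⟩
  have hchH : ∀ (i : ℕ) (h : i < l.length - 1),
      H'.Adj (l.get ⟨i, by omega⟩) (l.get ⟨i + 1, by omega⟩) := by
    intro i h
    exact hH'J (List.isChain_iff_getElem.mp hch i (by omega))
  rintro ⟨B, hB1, hB2, hB3⟩
  have hV : ∀ w, VConn G.spanningCoe (B w) := fun w => vconn_iff.mpr (hB1 w)
  have hdisj : ∀ w1 w2, w1 ≠ w2 → ∀ v, v ∈ B w1 → v ∉ B w2 :=
    fun w1 w2 hne v hv1 hv2 => Set.disjoint_left.mp (hB2 w1 w2 hne) hv1 hv2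
  have hBsub : ∀ w, ∀ v ∈ B w, v ∈ G.verts := by
    intro w v hv
    by_contra hvG
    have hiso : ∀ u, ¬ G.spanningCoe.Adj v u := fun u hadj => hvG hadj.fst_mem
    have hsing := vconn_isolated (hV w) hv hiso
    obtain ⟨w', hKadj⟩ := kbip_exists_adj t ht w
    obtain ⟨v1, hv1, v2, hv2, hadj⟩ := hB3 w w' hKadj
    rw [hsing] at hv1
    exact hiso v2 (hv1 ▸ hadj)
  by_cases hzB : ∃ w0, z ∈ B w0
  · obtain ⟨w0, hw0⟩ := hzB
    set A' : Set U := (B w0 \ {z}) ∪ Iset with hA'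
    set c : U := if x ∈ B w0 then x else if y ∈ B w0 then y else l.get ⟨1, by omega⟩ with hc
    set φ : U → U := fun u => if u = z then c else u with hφ
    have hgetA' : ∀ (k : ℕ) (hk : k < n), 1 ≤ k → k ≤ n - 2 → l.get ⟨k, hk⟩ ∈ A' :=
      fun k hk h1 h2 => Or.inr (hgetI k hk h1 h2)
    have hxA' : x ∈ B w0 → x ∈ A' := fun h => Or.inl ⟨h, by simpa using (Ne.symm hzx)⟩
    have hyA' : y ∈ B w0 → y ∈ A' := fun h => Or.inl ⟨h, by simpa using (Ne.symm hzy)⟩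
    have hcA' : c ∈ A' := by
      rw [hc]
      split_ifs with h1 h2
      · exact hxA' h1
      · exact hyA' h2
      · exact hgetA' 1 (by omega) le_rfl (by omega)
    -- the interior path from x to y inside A' (given x, y ∈ B w0 as needed)
    have hxyRTG : x ∈ B w0 → y ∈ B w0 → ReflTransGen (VStep H' A') x y := by
      intro hx0' hy0'
      have h := listRTG (F := H') (l := l) (S := A') hchH (i := 0) (j := n - 1)
        (by omega) (by omega) ?_
      · rwa [hgx, hgy] at h
      · intro k hk h1 h2
        rcases Nat.eq_zero_or_pos k with h | h
        · subst h
          rw [hgx]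
          exact hxA' hx0'
        · by_cases hk2 : k ≤ n - 2
          · exact hgetA' k hk h hk2
          · have : k = n - 1 := by omega
            subst this
            rw [hgy]
            exact hyA' hy0'
    have hIchain : ∀ v ∈ Iset, ReflTransGen (VStep H' A') v c := by
      intro v hv
      obtain ⟨k, hk, hk1, hk2, hg⟩ := hIget v hv
      rw [hc]
      split_ifs with h1 h2
      · -- c = x = l.get 0
        have h := listRTG (F := H') (l := l) (S := A') hchH (i := 0) (j := k)
          (by omega) hk ?_
        · rw [hgx, hg] at h
          exact rtg_symm vstep_symm h
        · intro k' hk' hh1 hh2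
          rcases Nat.eq_zero_or_pos k' with h' | h'
          · subst h'
            rw [hgx]
            exact hxA' h1
          · exact hgetA' k' hk' h' (by omega)
      · -- c = y
        have h := listRTG (F := H') (l := l) (S := A') hchH (i := k) (j := n - 1)
          (by omega) (by omega) ?_
        · rw [hgy, hg] at h
          exact h
        · intro k' hk' hh1 hh2
          by_cases hk2' : k' ≤ n - 2
          · exact hgetA' k' hk' (by omega) hk2'
          · have : k' = n - 1 := by omega
            subst this
            rw [hgy]
            exact hyA' h2
      · -- c = l.get 1
        have h := listRTG (F := H') (l := l) (S := A') hchH (i := 1) (j := k)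
          (by omega) hk (fun k' hk' hh1 hh2 => hgetA' k' hk' hh1 (by omega))
        rw [hg] at h
        exact rtg_symm vstep_symm h
    have hconnw0 : VConn H' A' := by
      refine mapconn φ (hV w0) ?_ ?_ ⟨c, hcA'⟩ ?_
      · rintro u v ⟨hu, hv, hadj⟩
        by_cases huz : u = z
        · by_cases hvz : v = z
          · exact absurd (huz ▸ hvz ▸ hadj) (fun h => h.ne rfl)
          · have hv' := hzadj v (huz ▸ hadj)
            have hφu : φ u = c := by rw [hφ]; simp [huz]
            have hφv : φ v = v := by rw [hφ]; simp [hvz]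
            rw [hφu, hφv]
            rcases hv' with h | h
            · have hx0' : x ∈ B w0 := h ▸ hv
              rw [h, hc, if_pos hx0']
            · have hy0' : y ∈ B w0 := h ▸ hv
              rw [h, hc]
              by_cases h1 : x ∈ B w0
              · rw [if_pos h1]
                exact hxyRTG h1 hy0'
              · rw [if_neg h1, if_pos hy0']
        · by_cases hvz : v = z
          · have hu' := hzadj u (hvz ▸ hadj.symm)
            have hφu : φ u = u := by rw [hφ]; simp [huz]
            have hφv : φ v = c := by rw [hφ]; simp [hvz]
            rw [hφu, hφv]
            rcases hu' with h | h
            · rw [h, hc, if_pos (h ▸ hu)]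
            · rw [h, hc]
              by_cases h1 : x ∈ B w0
              · rw [if_pos h1]
                exact rtg_symm vstep_symm (hxyRTG h1 (h ▸ hu))
              · rw [if_neg h1, if_pos (h ▸ hu)]
          · have hφu : φ u = u := by rw [hφ]; simp [huz]
            have hφv : φ v = v := by rw [hφ]; simp [hvz]
            rw [hφu, hφv]
            exact ReflTransGen.single
              ⟨Or.inl ⟨hu, by simpa using huz⟩, Or.inl ⟨hv, by simpa using hvz⟩,
                hH'G hadj huz hvz⟩
      · intro a ha
        by_cases haz : a = z
        · rw [hφ]
          simpa [haz] using hcA'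
        · rw [hφ]
          simp only [if_neg haz]
          exact Or.inl ⟨ha, by simpa using haz⟩
      · rintro b (⟨hb, hbz⟩ | hb)
        · refine ⟨b, hb, ?_⟩
          have hh : φ b = b := by
            rw [hφ]
            exact if_neg (show b ≠ z by simpa using hbz)
          rw [hh]
        · refine ⟨z, hw0, ?_⟩
          have hh : φ z = c := by
            rw [hφ]
            exact if_pos rfl
          rw [hh]
          exact hIchain b hb
    refine ⟨Function.update B w0 A', ?_, ?_, ?_⟩
    · intro w
      by_cases hw : w = w0
      · subst hw
        rw [Function.update_self]
        exact vconn_iff.mp hconnw0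
      · rw [Function.update_of_ne hw]
        refine vconn_iff.mp (mapconn id (hV w) ?_ (fun a ha => ha) (hV w).1 ?_)
        · rintro u v ⟨hu, hv, hadj⟩
          have huz : u ≠ z := fun h => hdisj w w0 hw z (h ▸ hu) hw0
          have hvz : v ≠ z := fun h => hdisj w w0 hw z (h ▸ hv) hw0
          exact ReflTransGen.single ⟨hu, hv, hH'G hadj huz hvz⟩
        · exact fun b hb => ⟨b, hb, .refl⟩
    · intro w1 w2 hne
      have key : ∀ w, w ≠ w0 → ∀ v, v ∈ A' → v ∉ B w := by
        rintro w hw v (⟨hv, hvz⟩ | hv) hvB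
        · exact hdisj w0 w (fun h => hw h.symm) v hv hvB
        · exact hIG v hv (hBsub w v hvB)
      by_cases h1 : w1 = w0
      · subst h1
        rw [Function.update_self, Function.update_of_ne (Ne.symm hne)]
        exact Set.disjoint_left.mpr (key w2 (Ne.symm hne))
      · by_cases h2 : w2 = w0
        · subst h2
          rw [Function.update_of_ne h1, Function.update_self]
          exact Set.disjoint_right.mpr (key w1 h1)
        · rw [Function.update_of_ne h1, Function.update_of_ne h2]
          exact hB2 w1 w2 hne
    · intro w1 w2 hKadj
      have hne12 : w1 ≠ w2 := hKadj.ne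
      obtain ⟨v1, hv1, v2, hv2, hadj⟩ := hB3 w1 w2 hKadj
      have hrealize : ∀ (wa wb : Fin 2 ⊕ Fin t), wa = w0 → wb ≠ w0 → ∀ vb ∈ B wb,
          G.Adj z vb →
          ∃ u1 ∈ Function.update B w0 A' wa, ∃ u2 ∈ Function.update B w0 A' wb,
            H'.Adj u1 u2 := by
        intro wa wb hwa hwb vb hvb hadj'
        subst hwa
        rcases hzadj vb hadj' with h | h
        · refine ⟨l.get ⟨1, by omega⟩, ?_, x, ?_, ?_⟩
          · rw [Function.update_self]
            exact hgetA' 1 (by omega) le_rfl (by omega)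
          · rw [Function.update_of_ne hwb]
            exact h ▸ hvb
          · have h' := hchH 0 (by omega)
            rw [hgx] at h'
            exact h'.symm
        · refine ⟨l.get ⟨n - 2, by omega⟩, ?_, y, ?_, ?_⟩
          · rw [Function.update_self]
            exact hgetA' (n - 2) (by omega) (by omega) le_rfl
          · rw [Function.update_of_ne hwb]
            exact h ▸ hvb
          · have h' := hchH (n - 2) (by omega)
            rw [get_congr (show n - 2 + 1 = n - 1 by omega) (by omega) (by omega),
              hgy] at h'
            exact h'
      by_cases h1 : w1 = w0
      · by_cases hv1z : v1 = z
        · exact hrealize w1 w2 h1 (fun h => hne12 (h1.trans h.symm)) v2 hv2 (hv1z ▸ hadj)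
        · refine ⟨v1, ?_, v2, ?_, hH'G hadj hv1z ?_⟩
          · subst h1
            rw [Function.update_self]
            exact Or.inl ⟨hv1, by simpa using hv1z⟩
          · rw [Function.update_of_ne (fun h => hne12 (h1.trans h.symm))]
            exact hv2
          · exact fun h => hdisj w2 w0 (fun hh => hne12 (h1.trans hh.symm)) z (h ▸ hv2) hw0
      · by_cases h2 : w2 = w0
        · by_cases hv2z : v2 = z
          · obtain ⟨u1, hu1, u2, hu2, hadj'⟩ :=
              hrealize w2 w1 h2 h1 v1 hv1
                (hv2z ▸ hadj.symm)
            exact ⟨u2, hu2, u1, hu1, hadj'.symm⟩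
          · refine ⟨v1, ?_, v2, ?_, hH'G hadj ?_ hv2z⟩
            · rw [Function.update_of_ne h1]
              exact hv1
            · subst h2
              rw [Function.update_self]
              exact Or.inl ⟨hv2, by simpa using hv2z⟩
            · exact fun h => hdisj w1 w0 h1 z (h ▸ hv1) hw0
        · have hv1z : v1 ≠ z := fun h => hdisj w1 w0 h1 z (h ▸ hv1) hw0
          have hv2z : v2 ≠ z := fun h => hdisj w2 w0 h2 z (h ▸ hv2) hw0
          refine ⟨v1, ?_, v2, ?_, hH'G hadj hv1z hv2z⟩
          · rw [Function.update_of_ne h1]; exact hv1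
          · rw [Function.update_of_ne h2]; exact hv2
  · -- z in no branch set: the model transfers directly
    push_neg at hzB
    refine ⟨B, ?_, hB2, ?_⟩
    · intro w
      refine vconn_iff.mp (mapconn id (hV w) ?_ (fun a ha => ha) (hV w).1 ?_)
      · rintro u v ⟨hu, hv, hadj⟩
        have huz : u ≠ z := fun h => hzB w (h ▸ hu)
        have hvz : v ≠ z := fun h => hzB w (h ▸ hv)
        exact ReflTransGen.single ⟨hu, hv, hH'G hadj huz hvz⟩
      · exact fun b hb => ⟨b, hb, .refl⟩
    · intro w1 w2 hKadj
      obtain ⟨v1, hv1, v2, hv2, hadj⟩ := hB3 w1 w2 hKadj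
      exact ⟨v1, hv1, v2, hv2, hH'G hadj (fun h => hzB w1 (h ▸ hv1))
        (fun h => hzB w2 (h ▸ hv2))⟩


/-- Direction 2: a `K_{2,t}` minor of `(G − z) ∪ J` yields one of `G`. -/
lemma dir2 (t : ℕ) (ht : 3 ≤ t)
    (G J : (⊤ : SimpleGraph U).Subgraph) (z x y : U)
    (hz : z ∈ G.verts) (hxy : x ≠ y) (hdeg : G.neighborSet z = {x, y})
    (hJG : J.verts ∩ G.verts = {x, y}) (hJ3 : 3 ≤ J.verts.ncard)
    (hJop : XYOuterplanar J.spanningCoe J.verts x y) :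
    IsMinor (completeBipartiteGraph (Fin 2) (Fin t))
      ((G.deleteVerts {z}) ⊔ J).spanningCoe →
    IsMinor (completeBipartiteGraph (Fin 2) (Fin t)) G.spanningCoe := by
  classical
  obtain ⟨hGzx, hGzy, hzadj, hzx, hzy, hxG, hyG, hxJ, hyJ, hzJ⟩ :=
    basic_facts G J z x y hz hxy hdeg hJG
  obtain ⟨l, hcov, hhead, hlast, hOL⟩ := hJop
  obtain ⟨hnd, hch, hncr⟩ := hOL
  set n := l.length with hn
  have hset : J.verts = (l.toFinset : Set U) := by
    ext v
    rw [List.coe_toFinset]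
    exact (hcov v).symm
  have hlen : 3 ≤ n := by
    have : J.verts.ncard = n := by
      rw [hset, Set.ncard_coe_finset, List.toFinset_card_of_nodup hnd]
    omega
  have h0n : 0 < n := by omega
  have hx0 : l.get ⟨0, h0n⟩ = x := head?_get hhead h0n
  have hyl : l.get ⟨n - 1, by omega⟩ = y := getLast?_get hlast h0n
  have hgx : ∀ (h : 0 < l.length), l.get ⟨0, h⟩ = x := fun _ => hx0
  have hgy : ∀ (h : n - 1 < l.length), l.get ⟨n - 1, h⟩ = y := fun _ => hyl
  set Iset : Set U := J.verts \ {x, y} with hIdef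
  have hIJ : ∀ v ∈ Iset, v ∈ J.verts := fun v hv => hv.1
  have hIx : x ∉ Iset := fun h => h.2 (Or.inl rfl)
  have hIy : y ∉ Iset := fun h => h.2 (Or.inr rfl)
  have hIG : ∀ v ∈ Iset, v ∉ G.verts := by
    intro v hv hvG
    have : v ∈ J.verts ∩ G.verts := ⟨hv.1, hvG⟩
    rw [hJG] at this
    exact hv.2 this
  have hJnI : ∀ v ∈ J.verts, v ∉ Iset → v = x ∨ v = y := by
    intro v hv hvI
    by_contra hcon
    push_neg at hcon
    exact hvI ⟨hv, by simp [hcon.1, hcon.2]⟩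
  set H' := ((G.deleteVerts {z}) ⊔ J).spanningCoe with hH'
  set JJ := AddEdge J.spanningCoe x y with hJJ
  have hOLJJ : OuterListing JJ l := outerListing_addEdge ⟨hnd, hch, hncr⟩ hhead hlast
  have hJJJ : ∀ {u v : U}, J.Adj u v → JJ.Adj u v := fun h => addEdge_adj.mpr (Or.inl h)
  have hJJxy : JJ.Adj x y := addEdge_adj.mpr (Or.inr ⟨hxy, Or.inl ⟨rfl, rfl⟩⟩)
  have hedge : ∀ {u v : U}, H'.Adj u v → (G.Adj u v ∧ u ≠ z ∧ v ≠ z) ∨ J.Adj u v := by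
    intro u v h
    rcases SimpleGraph.Subgraph.sup_adj.mp h with h | h
    · have h' := SimpleGraph.Subgraph.deleteVerts_adj.mp h
      exact Or.inl ⟨h'.2.2.2.2, by simpa using h'.2.1, by simpa using h'.2.2.2.1⟩
    · exact Or.inr h
  have hIedge : ∀ {u v : U}, H'.Adj u v → u ∈ Iset → J.Adj u v := by
    intro u v h hu
    rcases hedge h with ⟨h', -, -⟩ | h'
    · exact absurd h'.fst_mem (hIG u hu)
    · exact h'
  rintro ⟨B, hB1, hB2, hB3⟩
  have hV : ∀ w, VConn H' (B w) := fun w => vconn_iff.mpr (hB1 w)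
  have hdisj : ∀ w1 w2, w1 ≠ w2 → ∀ v, v ∈ B w1 → v ∉ B w2 :=
    fun w1 w2 hne v hv1 hv2 => Set.disjoint_left.mp (hB2 w1 w2 hne) hv1 hv2
  have hBsub : ∀ w, ∀ v ∈ B w, v ∈ (G.verts \ {z}) ∪ J.verts := by
    intro w v hv
    by_contra hvG
    have hiso : ∀ u, ¬ H'.Adj v u := by
      intro u hadj
      apply hvG
      rcases hedge hadj with ⟨hG, hvz, -⟩ | hJd
      · exact Or.inl ⟨hG.fst_mem, by simpa using hvz⟩
      · exact Or.inr hJd.fst_mem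
    have hsing := vconn_isolated (hV w) hv hiso
    obtain ⟨w', hKadj⟩ := kbip_exists_adj t ht w
    obtain ⟨v1, hv1, v2, hv2, hadj⟩ := hB3 w w' hKadj
    rw [hsing] at hv1
    exact hiso v2 (hv1 ▸ hadj)
  have hBz : ∀ w, z ∉ B w := by
    intro w hzB
    rcases hBsub w z hzB with h | h
    · exact h.2 rfl
    · exact hzJ h
  have hBne : ∀ w, (B w).Nonempty := fun w => (hV w).1
  have hMeet : ∀ w, ¬ (B w ⊆ Iset) → ∀ u, u ∈ B w → u ∈ Iset → x ∈ B w ∨ y ∈ B w := by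
    intro w hws u hu huI
    obtain ⟨v, hvB, hvI⟩ := Set.not_subset.mp hws
    obtain ⟨a, haI, b, hbI, hstep⟩ := rtg_exit ((hV w).2 u hu v hvB) huI hvI
    have hJab : J.Adj a b := hIedge hstep.2.2 haI
    have hbJ : b ∈ J.verts := hJab.snd_mem
    rcases hJnI b hbJ hbI with h | h
    · exact Or.inl (h ▸ hstep.2.1)
    · exact Or.inr (h ▸ hstep.2.1)
  have hclass : ∀ w, (B w ∩ J.verts).Nonempty → B w ⊆ Iset ∨ x ∈ B w ∨ y ∈ B w := by
    intro w ⟨u, huB, huJ⟩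
    by_cases hws : B w ⊆ Iset
    · exact Or.inl hws
    · by_cases huI : u ∈ Iset
      · exact Or.inr (hMeet w hws u huB huI)
      · rcases hJnI u huJ huI with h | h
        · exact Or.inr (Or.inl (h ▸ huB))
        · exact Or.inr (Or.inr (h ▸ huB))
  have hF5 : ∀ w1 w2, (completeBipartiteGraph (Fin 2) (Fin t)).Adj w1 w2 → B w1 ⊆ Iset →
      ∃ u ∈ B w1 ∩ J.verts, ∃ v ∈ B w2 ∩ J.verts, JJ.Adj u v := by
    intro w1 w2 hK hsub
    obtain ⟨v1, hv1, v2, hv2, hadj⟩ := hB3 w1 w2 hK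
    have hJ12 : J.Adj v1 v2 := hIedge hadj (hsub hv1)
    exact ⟨v1, ⟨hv1, (hsub hv1).1⟩, v2, ⟨hv2, hJ12.snd_mem⟩, hJJJ hJ12⟩
  have hJPconn : ∀ w, (x ∈ B w ∨ y ∈ B w ∨ B w ⊆ J.verts) → (B w ∩ J.verts).Nonempty →
      VConn JJ (B w ∩ J.verts) := by
    intro w hyp hne
    set c : U := if x ∈ B w then x else y with hc
    have hcJP : x ∈ B w ∨ y ∈ B w → c ∈ B w ∩ J.verts := by
      intro h
      rw [hc]
      by_cases h1 : x ∈ B w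
      · rw [if_pos h1]
        exact ⟨h1, hxJ⟩
      · rw [if_neg h1]
        rcases h with h | h
        · exact absurd h h1
        · exact ⟨h, hyJ⟩
    set φ : U → U := fun u => if u ∈ J.verts then u else c with hφ
    have hφJ : ∀ u, u ∈ J.verts → φ u = u := by
      intro u hu
      rw [hφ]
      exact if_pos hu
    have hφN : ∀ u, u ∉ J.verts → φ u = c := by
      intro u hu
      rw [hφ]
      exact if_neg hu
    have hbstep : ∀ u, u ∈ ({x, y} : Set U) → u ∈ B w ∩ J.verts →
        ReflTransGen (VStep JJ (B w ∩ J.verts)) u c := by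
      intro u humem huJP
      rw [hc]
      by_cases h1 : x ∈ B w
      · rw [if_pos h1]
        rcases humem with h | h
        · rw [h]
        · subst h
          exact ReflTransGen.single ⟨huJP, ⟨h1, hxJ⟩, hJJxy.symm⟩
      · rw [if_neg h1]
        rcases humem with h | h
        · exact absurd (h ▸ huJP.1) h1
        · rw [h]
    refine mapconn φ (hV w) ?_ ?_ hne ?_
    · rintro u v ⟨hu, hv, hadj⟩
      by_cases huJ : u ∈ J.verts
      · by_cases hvJ : v ∈ J.verts
        · rw [hφJ u huJ, hφJ v hvJ]
          rcases hedge hadj with ⟨hG, -, -⟩ | hJd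
          · have hux : u = x ∨ u = y := by
              have : u ∈ J.verts ∩ G.verts := ⟨huJ, hG.fst_mem⟩
              rw [hJG] at this
              exact this
            have hvx : v = x ∨ v = y := by
              have : v ∈ J.verts ∩ G.verts := ⟨hvJ, hG.snd_mem⟩
              rw [hJG] at this
              exact this
            have huv : u ≠ v := hG.ne
            have hJJuv : JJ.Adj u v := by
              rcases hux with h1 | h1 <;> rcases hvx with h2 | h2
              · exact absurd (h1.trans h2.symm) huv
              · rw [h1, h2]; exact hJJxy
              · rw [h1, h2]; exact hJJxy.symm
              · exact absurd (h1.trans h2.symm) huv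
            exact ReflTransGen.single ⟨⟨hu, huJ⟩, ⟨hv, hvJ⟩, hJJuv⟩
          · exact ReflTransGen.single ⟨⟨hu, huJ⟩, ⟨hv, hvJ⟩, hJJJ hJd⟩
        · rcases hedge hadj with ⟨hG, -, -⟩ | hJd
          · have hux : u = x ∨ u = y := by
              have : u ∈ J.verts ∩ G.verts := ⟨huJ, hG.fst_mem⟩
              rw [hJG] at this
              exact this
            rw [hφJ u huJ, hφN v hvJ]
            exact hbstep u (by rcases hux with h | h <;> simp [h]) ⟨hu, huJ⟩
          · exact absurd hJd.snd_mem hvJ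
      · by_cases hvJ : v ∈ J.verts
        · rcases hedge hadj with ⟨hG, -, -⟩ | hJd
          · have hvx : v = x ∨ v = y := by
              have : v ∈ J.verts ∩ G.verts := ⟨hvJ, hG.snd_mem⟩
              rw [hJG] at this
              exact this
            rw [hφN u huJ, hφJ v hvJ]
            exact rtg_symm vstep_symm
              (hbstep v (by rcases hvx with h | h <;> simp [h]) ⟨hv, hvJ⟩)
          · exact absurd hJd.fst_mem huJ
        · rw [hφN u huJ, hφN v hvJ]
    · intro a ha
      by_cases haJ : a ∈ J.verts
      · rw [hφJ a haJ]
        exact ⟨ha, haJ⟩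
      · rw [hφN a haJ]
        rcases hyp with h | h | h
        · exact hcJP (Or.inl h)
        · exact hcJP (Or.inr h)
        · exact absurd (h ha) haJ
    · intro b hb
      exact ⟨b, hb.1, by rw [hφJ b hb.2]⟩
  have hJPsub : ∀ w, ∀ v ∈ B w ∩ J.verts, v ∈ l := fun w v hv => (hcov v).mpr hv.2
  have hIsubJ : ∀ w, B w ⊆ Iset → (x ∈ B w ∨ y ∈ B w ∨ B w ⊆ J.verts) :=
    fun w h => Or.inr (Or.inr (fun v hv => (h hv).1))
  have hsplit : ∀ w w', w ≠ w' → (B w ∩ J.verts).Nonempty → (B w' ∩ J.verts).Nonempty →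
      ¬ B w ⊆ Iset → ¬ B w' ⊆ Iset →
      (x ∈ B w ∧ y ∈ B w') ∨ (y ∈ B w ∧ x ∈ B w') := by
    intro w w' hne hne1 hne2 hns1 hns2
    rcases hclass w hne1 with h | h | h
    · exact absurd h hns1
    · rcases hclass w' hne2 with h' | h' | h'
      · exact absurd h' hns2
      · exact absurd h' (hdisj w w' hne x h)
      · exact Or.inl ⟨h, h'⟩
    · rcases hclass w' hne2 with h' | h' | h'
      · exact absurd h' hns2
      · exact Or.inr ⟨h, h'⟩
      · exact absurd h' (hdisj w w' hne y h)
  -- At most one branch set is contained in the interior of J.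
  have hTwo : ∀ w1 w2, w1 ≠ w2 → B w1 ⊆ Iset → B w2 ⊆ Iset → False := by
    intro w1 w2 hne hw1 hw2
    have hJPc : ∀ w, B w ⊆ Iset → (B w ∩ J.verts).Nonempty := by
      intro w hw
      obtain ⟨v, hv⟩ := hBne w
      exact ⟨v, hv, (hw hv).1⟩
    have hne01 : (Sum.inl 0 : Fin 2 ⊕ Fin t) ≠ Sum.inl 1 := by
      intro h
      exact absurd (Sum.inl.inj h) (by decide)
    have hlr : ∀ (i : Fin 2) (j : Fin t), (Sum.inl i : Fin 2 ⊕ Fin t) ≠ Sum.inr j :=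
      fun i j h => by simp at h
    have hrr : ∀ (j j' : Fin t), j ≠ j' →
        (Sum.inr j : Fin 2 ⊕ Fin t) ≠ Sum.inr j' :=
      fun j j' hne' h => hne' (Sum.inr.inj h)
    have hfne : ∀ (a b : ℕ) (ha : a < t) (hb : b < t), a ≠ b →
        (⟨a, ha⟩ : Fin t) ≠ ⟨b, hb⟩ :=
      fun a b ha hb hne' h => hne' (by simpa [Fin.ext_iff] using h)
    by_cases hL : ∃ i : Fin 2, B (Sum.inl i) ⊆ Iset
    · obtain ⟨i, hi⟩ := hL
      have hJPneInr : ∀ j : Fin t, (B (Sum.inr j) ∩ J.verts).Nonempty := by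
        intro j
        obtain ⟨u, -, v, hv, -⟩ := hF5 (Sum.inl i) (Sum.inr j) (kbip_adj_lr i j) hi
        exact ⟨v, hv⟩
      have hExInr : ∀ i' : Fin 2, ¬ B (Sum.inl i') ⊆ Iset → ∃ j : Fin t, B (Sum.inr j) ⊆ Iset := by
        intro i' hi'
        cases w1 with
        | inr j1 => exact ⟨j1, hw1⟩
        | inl a =>
          cases w2 with
          | inr j2 => exact ⟨j2, hw2⟩
          | inl b =>
            exfalso
            have hab : a ≠ b := fun h => hne (by rw [h])
            have : i' = a ∨ i' = b := by
              rcases Fin.exists_fin_two.mp ⟨i', rfl⟩ with h | h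
              all_goals {
                have ha' := Fin.is_le a
                have hb' := Fin.is_le b
                have hi2 := Fin.is_le i'
                have : (i' : ℕ) = a ∨ (i' : ℕ) = b := by omega
                rcases this with h' | h'
                · exact Or.inl (Fin.ext h')
                · exact Or.inr (Fin.ext h') }
            rcases this with h | h
            · exact hi' (h ▸ hw1)
            · exact hi' (h ▸ hw2)
      have hJPneInl : ∀ i' : Fin 2, (B (Sum.inl i') ∩ J.verts).Nonempty := by
        intro i'
        by_cases hi' : B (Sum.inl i') ⊆ Iset
        · exact hJPc _ hi'
        · obtain ⟨j, hj⟩ := hExInr i' hi'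
          obtain ⟨u, -, v, hv, -⟩ := hF5 (Sum.inr j) (Sum.inl i') (kbip_adj_lr i' j).symm hj
          exact ⟨v, hv⟩
      have hadjLR : ∀ (i' : Fin 2) (j' : Fin t),
          ∃ u ∈ B (Sum.inl i') ∩ J.verts, ∃ v ∈ B (Sum.inr j') ∩ J.verts, JJ.Adj u v := by
        intro i' j'
        by_cases h1 : B (Sum.inl i') ⊆ Iset
        · exact hF5 _ _ (kbip_adj_lr i' j') h1
        · by_cases h2 : B (Sum.inr j') ⊆ Iset
          · obtain ⟨u, hu, v, hv, hadj⟩ := hF5 _ _ (kbip_adj_lr i' j').symm h2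
            exact ⟨v, hv, u, hu, hadj.symm⟩
          · rcases hsplit _ _ (hlr i' j') (hJPneInl i') (hJPneInr j') h1 h2
                with ⟨ha, hb⟩ | ⟨ha, hb⟩
            · exact ⟨x, ⟨ha, hxJ⟩, y, ⟨hb, hyJ⟩, hJJxy⟩
            · exact ⟨y, ⟨ha, hyJ⟩, x, ⟨hb, hxJ⟩, hJJxy.symm⟩
      have hconn' : ∀ w, (B w ∩ J.verts).Nonempty → VConn JJ (B w ∩ J.verts) := by
        intro w hne'
        refine hJPconn w ?_ hne'
        by_cases hw : B w ⊆ Iset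
        · exact hIsubJ w hw
        · rcases hclass w hne' with h | h | h
          · exact absurd h hw
          · exact Or.inl h
          · exact Or.inr (Or.inl h)
      have hdsj : ∀ w w', w ≠ w' → ∀ v ∈ B w ∩ J.verts, v ∉ B w' ∩ J.verts :=
        fun w w' hne' v hv hv' => hdisj w w' hne' v hv.1 hv'.1
      have ht0 : (0 : ℕ) < t := by omega
      have ht1 : (1 : ℕ) < t := by omega
      have ht2 : (2 : ℕ) < t := by omega
      refine vk23 hOLJJ (hJPsub (Sum.inl 0)) (hJPsub (Sum.inl 1))
        (hJPsub (Sum.inr ⟨0, ht0⟩)) (hJPsub (Sum.inr ⟨1, ht1⟩)) (hJPsub (Sum.inr ⟨2, ht2⟩))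
        (hconn' _ (hJPneInl 0)) (hconn' _ (hJPneInl 1))
        (hconn' _ (hJPneInr ⟨0, ht0⟩)) (hconn' _ (hJPneInr ⟨1, ht1⟩))
        (hconn' _ (hJPneInr ⟨2, ht2⟩))
        (hdsj _ _ hne01) (hdsj _ _ (hlr _ _)) (hdsj _ _ (hlr _ _)) (hdsj _ _ (hlr _ _))
        (hdsj _ _ (hlr _ _)) (hdsj _ _ (hlr _ _)) (hdsj _ _ (hlr _ _))
        (hdsj _ _ (hrr _ _ (hfne 0 1 ht0 ht1 (by omega))))
        (hdsj _ _ (hrr _ _ (hfne 0 2 ht0 ht2 (by omega))))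
        (hdsj _ _ (hrr _ _ (hfne 1 2 ht1 ht2 (by omega))))
        (hadjLR 0 ⟨0, ht0⟩) (hadjLR 0 ⟨1, ht1⟩) (hadjLR 0 ⟨2, ht2⟩)
        (hadjLR 1 ⟨0, ht0⟩) (hadjLR 1 ⟨1, ht1⟩) (hadjLR 1 ⟨2, ht2⟩)
    · push_neg at hL
      have hw1r : ∃ j1 : Fin t, w1 = Sum.inr j1 := by
        cases w1 with
        | inl a => exact absurd hw1 (hL a)
        | inr j => exact ⟨j, rfl⟩
      have hw2r : ∃ j2 : Fin t, w2 = Sum.inr j2 := by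
        cases w2 with
        | inl a => exact absurd hw2 (hL a)
        | inr j => exact ⟨j, rfl⟩
      obtain ⟨j1, rfl⟩ := hw1r
      obtain ⟨j2, rfl⟩ := hw2r
      have hne0 : (B (Sum.inl 0) ∩ J.verts).Nonempty := by
        obtain ⟨u, -, v, hv, -⟩ := hF5 _ _ (kbip_adj_lr 0 j1).symm hw1
        exact ⟨v, hv⟩
      have hne1 : (B (Sum.inl 1) ∩ J.verts).Nonempty := by
        obtain ⟨u, -, v, hv, -⟩ := hF5 _ _ (kbip_adj_lr 1 j1).symm hw1
        exact ⟨v, hv⟩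
      have hconn' : ∀ w, (B w ∩ J.verts).Nonempty → VConn JJ (B w ∩ J.verts) := by
        intro w hne'
        refine hJPconn w ?_ hne'
        by_cases hw : B w ⊆ Iset
        · exact hIsubJ w hw
        · rcases hclass w hne' with h | h | h
          · exact absurd h hw
          · exact Or.inl h
          · exact Or.inr (Or.inl h)
      have hdsj : ∀ w w', w ≠ w' → ∀ v ∈ B w ∩ J.verts, v ∉ B w' ∩ J.verts :=
        fun w w' hne' v hv hv' => hdisj w w' hne' v hv.1 hv'.1
      have hja : j1 ≠ j2 := fun h => hne (by rw [h])
      have hne01 : (Sum.inl 0 : Fin 2 ⊕ Fin t) ≠ Sum.inl 1 := by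
        intro h
        exact absurd (Sum.inl.inj h) (by decide)
      have hlr : ∀ (i : Fin 2) (j : Fin t), (Sum.inl i : Fin 2 ⊕ Fin t) ≠ Sum.inr j :=
        fun i j h => by simp at h
      have hrj : (Sum.inr j1 : Fin 2 ⊕ Fin t) ≠ Sum.inr j2 :=
        fun h => hja (Sum.inr.inj h)
      rcases hsplit (Sum.inl 0) (Sum.inl 1) hne01 hne0 hne1 (hL 0) (hL 1)
          with ⟨ha, hb⟩ | ⟨ha, hb⟩
      · refine vopgen hOLJJ (hJPsub (Sum.inl 0)) (hJPsub (Sum.inl 1))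
          (hJPsub (Sum.inr j1)) (hJPsub (Sum.inr j2))
          (hconn' _ hne0) (hconn' _ hne1) (hconn' _ (hJPc _ hw1)) (hconn' _ (hJPc _ hw2))
          (hdsj _ _ hne01) (hdsj _ _ (hlr _ _)) (hdsj _ _ (hlr _ _))
          (hdsj _ _ (hlr _ _)) (hdsj _ _ (hlr _ _))
          (hdsj _ _ hrj) h0n ?_ ?_
          (hF5 _ _ (kbip_adj_lr 0 j1).symm hw1) (hF5 _ _ (kbip_adj_lr 1 j1).symm hw1)
          (hF5 _ _ (kbip_adj_lr 0 j2).symm hw2) (hF5 _ _ (kbip_adj_lr 1 j2).symm hw2)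
        · rw [hgx]
          exact ⟨ha, hxJ⟩
        · rw [hgy]
          exact ⟨hb, hyJ⟩
      · refine vopgen hOLJJ (hJPsub (Sum.inl 1)) (hJPsub (Sum.inl 0))
          (hJPsub (Sum.inr j1)) (hJPsub (Sum.inr j2))
          (hconn' _ hne1) (hconn' _ hne0) (hconn' _ (hJPc _ hw1)) (hconn' _ (hJPc _ hw2))
          (hdsj _ _ hne01.symm) (hdsj _ _ (hlr _ _)) (hdsj _ _ (hlr _ _))
          (hdsj _ _ (hlr _ _)) (hdsj _ _ (hlr _ _))
          (hdsj _ _ hrj) h0n ?_ ?_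
          (hF5 _ _ (kbip_adj_lr 1 j1).symm hw1) (hF5 _ _ (kbip_adj_lr 0 j1).symm hw1)
          (hF5 _ _ (kbip_adj_lr 1 j2).symm hw2) (hF5 _ _ (kbip_adj_lr 0 j2).symm hw2)
        · rw [hgx]
          exact ⟨hb, hxJ⟩
        · rw [hgy]
          exact ⟨ha, hyJ⟩
  have hUniq : ∀ w w', B w ⊆ Iset → B w' ⊆ Iset → w = w' := by
    intro w w' h1 h2
    by_contra hne
    exact hTwo w w' hne h1 h2
  have hIstep : ∀ w u v, u ∈ B w → v ∈ B w → H'.Adj u v → u ∈ Iset → v ∉ Iset →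
      (v = x ∨ v = y) ∧ v ∈ B w := by
    intro w u v hu hv hadj huI hvI
    have hJuv := hIedge hadj huI
    exact ⟨hJnI v hJuv.snd_mem hvI, hv⟩
  have hGstep : ∀ u v, H'.Adj u v → u ∉ Iset → v ∉ Iset →
      G.Adj u v ∨ ((u = x ∧ v = y) ∨ (u = y ∧ v = x)) := by
    intro u v hadj huI hvI
    rcases hedge hadj with ⟨hG, -, -⟩ | hJd
    · exact Or.inl hG
    · have hu := hJnI u hJd.fst_mem huI
      have hv := hJnI v hJd.snd_mem hvI
      have huv : u ≠ v := hJd.ne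
      right
      rcases hu with h1 | h1 <;> rcases hv with h2 | h2
      · exact absurd (h1.trans h2.symm) huv
      · exact Or.inl ⟨h1, h2⟩
      · exact Or.inr ⟨h1, h2⟩
      · exact absurd (h1.trans h2.symm) huv
  have hconnD : ∀ (w : Fin 2 ⊕ Fin t) (c : U), ¬ (B w ⊆ Iset) → c ∉ Iset →
      ((B w ∩ Iset).Nonempty → c ∈ B w) →
      (∀ v, (v = x ∨ v = y) → v ∈ B w → v = c) →
      VConn G.spanningCoe (B w \ Iset) := by
    intro w c hns hcI hcB hOnly
    set φ : U → U := fun u => if u ∈ Iset then c else u with hφ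
    have hφI : ∀ u, u ∈ Iset → φ u = c := fun u hu => by rw [hφ]; exact if_pos hu
    have hφN : ∀ u, u ∉ Iset → φ u = u := fun u hu => by rw [hφ]; exact if_neg hu
    obtain ⟨b0, hb0, hb0I⟩ := Set.not_subset.mp hns
    refine mapconn φ (hV w) ?_ ?_ ⟨b0, hb0, hb0I⟩ ?_
    · rintro u v ⟨hu, hv, hadj⟩
      by_cases huI : u ∈ Iset
      · by_cases hvI : v ∈ Iset
        · rw [hφI u huI, hφI v hvI]
        · obtain ⟨hvxy, hvB⟩ := hIstep w u v hu hv hadj huI hvI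
          rw [hφI u huI, hφN v hvI, hOnly v hvxy hvB]
      · by_cases hvI : v ∈ Iset
        · obtain ⟨huxy, huB⟩ := hIstep w v u hv hu hadj.symm hvI huI
          rw [hφN u huI, hφI v hvI, hOnly u huxy huB]
        · rcases hGstep u v hadj huI hvI with hG | hxy'
          · rw [hφN u huI, hφN v hvI]
            exact ReflTransGen.single ⟨⟨hu, huI⟩, ⟨hv, hvI⟩, hG⟩
          · exfalso
            rcases hxy' with ⟨h1, h2⟩ | ⟨h1, h2⟩
            · exact hxy ((hOnly x (Or.inl rfl) (h1 ▸ hu)).trans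
                (hOnly y (Or.inr rfl) (h2 ▸ hv)).symm)
            · exact hxy ((hOnly x (Or.inl rfl) (h2 ▸ hv)).trans
                (hOnly y (Or.inr rfl) (h1 ▸ hu)).symm)
    · intro a ha
      by_cases haI : a ∈ Iset
      · rw [hφI a haI]
        exact ⟨hcB ⟨a, ha, haI⟩, hcI⟩
      · rw [hφN a haI]
        exact ⟨ha, haI⟩
    · intro b hb
      exact ⟨b, hb.1, by rw [hφN b hb.2]⟩
  have hmemD : ∀ (w : Fin 2 ⊕ Fin t) (v : U), v ∈ B w → v ∉ Iset → v ∈ B w \ Iset :=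
    fun w v hv hvI => ⟨hv, hvI⟩
  by_cases hEx : ∃ w0, B w0 ⊆ Iset
  · obtain ⟨w0, hw0⟩ := hEx
    have hNbr : ∀ w', (completeBipartiteGraph (Fin 2) (Fin t)).Adj w0 w' →
        x ∈ B w' ∨ y ∈ B w' := by
      intro w' hK
      obtain ⟨u, hu, v, hv, hadj⟩ := hF5 w0 w' hK hw0
      rcases hclass w' ⟨v, hv⟩ with h | h | h
      · exact absurd (hUniq w' w0 h hw0) (Ne.symm hK.ne)
      · exact Or.inl h
      · exact Or.inr h
    have hne01 : (Sum.inl 0 : Fin 2 ⊕ Fin t) ≠ Sum.inl 1 := by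
      intro h
      exact absurd (Sum.inl.inj h) (by decide)
    obtain ⟨j0, hj0⟩ : ∃ j0, w0 = Sum.inr j0 := by
      cases w0 with
      | inr j => exact ⟨j, rfl⟩
      | inl i =>
        exfalso
        have ht0 : (0 : ℕ) < t := by omega
        have ht1 : (1 : ℕ) < t := by omega
        have ht2 : (2 : ℕ) < t := by omega
        have h0 := hNbr (Sum.inr ⟨0, ht0⟩) (kbip_adj_lr i _)
        have h1 := hNbr (Sum.inr ⟨1, ht1⟩) (kbip_adj_lr i _)
        have h2 := hNbr (Sum.inr ⟨2, ht2⟩) (kbip_adj_lr i _)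
        have hd : ∀ (a b : ℕ) (ha : a < t) (hb : b < t), a ≠ b → ∀ v : U,
            v ∈ B (Sum.inr ⟨a, ha⟩) → v ∉ B (Sum.inr ⟨b, hb⟩) := by
          intro a b ha hb hab v hv1 hv2
          exact hdisj _ _ (fun h => hab (by simpa [Fin.ext_iff] using Sum.inr.inj h)) v hv1 hv2
        rcases h0 with h0 | h0 <;> rcases h1 with h1 | h1 <;> rcases h2 with h2 | h2
        · exact hd 0 1 ht0 ht1 (by omega) x h0 h1
        · exact hd 0 1 ht0 ht1 (by omega) x h0 h1
        · exact hd 0 2 ht0 ht2 (by omega) x h0 h2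
        · exact hd 1 2 ht1 ht2 (by omega) y h1 h2
        · exact hd 1 2 ht1 ht2 (by omega) x h1 h2
        · exact hd 0 2 ht0 ht2 (by omega) y h0 h2
        · exact hd 0 1 ht0 ht1 (by omega) y h0 h1
        · exact hd 0 1 ht0 ht1 (by omega) y h0 h1
    obtain ⟨p, q, hpq, hxp, hyq⟩ :
        ∃ p q : Fin 2, p ≠ q ∧ x ∈ B (Sum.inl p) ∧ y ∈ B (Sum.inl q) := by
      have h0 := hNbr (Sum.inl 0) (by rw [hj0]; exact (kbip_adj_lr 0 j0).symm)
      have h1 := hNbr (Sum.inl 1) (by rw [hj0]; exact (kbip_adj_lr 1 j0).symm)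
      rcases h0 with h0 | h0 <;> rcases h1 with h1 | h1
      · exact absurd h1 (hdisj _ _ hne01 x h0)
      · exact ⟨0, 1, by decide, h0, h1⟩
      · exact ⟨1, 0, by decide, h1, h0⟩
      · exact absurd h1 (hdisj _ _ hne01 y h0)
    have hxonly : ∀ w, x ∈ B w → w = Sum.inl p := by
      intro w hw
      by_contra hne
      exact hdisj w _ hne x hw hxp
    have hyonly : ∀ w, y ∈ B w → w = Sum.inl q := by
      intro w hw
      by_contra hne
      exact hdisj w _ hne y hw hyq
    have hNK : ∀ (a b : Fin 2), ¬ (completeBipartiteGraph (Fin 2) (Fin t)).Adj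
        (Sum.inl a) (Sum.inl b) := by
      intro a b h
      simp at h
    have hkey : ∀ va vb wA wB, wA ≠ w0 → wB ≠ w0 →
        (completeBipartiteGraph (Fin 2) (Fin t)).Adj wA wB →
        va ∈ B wA → vb ∈ B wB → H'.Adj va vb → va ∈ Iset → False := by
      intro va vb wA wB hA hB hKab hva hvb hadj' hvaI
      have hJab := hIedge hadj' hvaI
      have hABxy := hMeet wA (fun hsub => hA (hUniq wA w0 hsub hw0)) va hva hvaI
      have hA' : wA = Sum.inl p ∨ wA = Sum.inl q := by
        rcases hABxy with h | h
        · exact Or.inl (hxonly wA h)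
        · exact Or.inr (hyonly wA h)
      have hvbJ : vb ∈ J.verts := hJab.snd_mem
      by_cases hvbI : vb ∈ Iset
      · have hBxy := hMeet wB (fun hsub => hB (hUniq wB w0 hsub hw0)) vb hvb hvbI
        have hB' : wB = Sum.inl p ∨ wB = Sum.inl q := by
          rcases hBxy with h | h
          · exact Or.inl (hxonly wB h)
          · exact Or.inr (hyonly wB h)
        rcases hA' with h1 | h1 <;> rcases hB' with h2 | h2 <;>
          rw [h1, h2] at hKab <;> exact hNK _ _ hKab
      · rcases hJnI vb hvbJ hvbI with h | h
        · have h2 : wB = Sum.inl p := hxonly wB (h ▸ hvb)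
          rcases hA' with h1 | h1 <;> rw [h1, h2] at hKab <;> exact hNK _ _ hKab
        · have h2 : wB = Sum.inl q := hyonly wB (h ▸ hvb)
          rcases hA' with h1 | h1 <;> rw [h1, h2] at hKab <;> exact hNK _ _ hKab
    refine ⟨Function.update (fun w => B w \ Iset) w0 {z}, ?_, ?_, ?_⟩
    · intro w
      by_cases hw : w = w0
      · subst hw
        rw [Function.update_self]
        exact vconn_iff.mp (vconn_singleton _ z)
      · rw [Function.update_of_ne hw]
        have hns : ¬ B w ⊆ Iset := fun hsub => hw (hUniq w w0 hsub hw0)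
        by_cases hxw : x ∈ B w
        · refine vconn_iff.mp (hconnD w x hns hIx (fun _ => hxw) ?_)
          intro v hv hvB
          rcases hv with h | h
          · exact h
          · exfalso
            have h1 := hxonly w hxw
            have h2 := hyonly w (h ▸ hvB)
            exact hpq (Sum.inl.inj (h1.symm.trans h2))
        · refine vconn_iff.mp (hconnD w y hns hIy ?_ ?_)
          · rintro ⟨u, hu, huI⟩
            rcases hMeet w hns u hu huI with h | h
            · exact absurd h hxw
            · exact h
          · intro v hv hvB
            rcases hv with h | h
            · exact absurd (h ▸ hvB) hxw
            · exact h
    · intro w1 w2 hne'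
      refine Set.disjoint_left.mpr ?_
      intro v hv1 hv2
      by_cases h1 : w1 = w0
      · subst h1
        rw [Function.update_self] at hv1
        rw [Function.update_of_ne (Ne.symm hne')] at hv2
        exact hBz w2 (hv1 ▸ hv2.1)
      · rw [Function.update_of_ne h1] at hv1
        by_cases h2 : w2 = w0
        · subst h2
          rw [Function.update_self] at hv2
          exact hBz w1 (hv2 ▸ hv1.1)
        · rw [Function.update_of_ne h2] at hv2
          exact hdisj w1 w2 hne' v hv1.1 hv2.1
    · intro w1 w2 hK
      have hne12 := hK.ne
      by_cases h1 : w1 = w0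
      · subst h1
        rcases hNbr w2 hK with hx2 | hy2
        · refine ⟨z, ?_, x, ?_, hGzx⟩
          · rw [Function.update_self]
            rfl
          · rw [Function.update_of_ne (Ne.symm hne12)]
            exact ⟨hx2, hIx⟩
        · refine ⟨z, ?_, y, ?_, hGzy⟩
          · rw [Function.update_self]
            rfl
          · rw [Function.update_of_ne (Ne.symm hne12)]
            exact ⟨hy2, hIy⟩
      · by_cases h2 : w2 = w0
        · subst h2
          rcases hNbr w1 hK.symm with hx1 | hy1
          · refine ⟨x, ?_, z, ?_, hGzx.symm⟩
            · rw [Function.update_of_ne h1]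
              exact ⟨hx1, hIx⟩
            · rw [Function.update_self]
              rfl
          · refine ⟨y, ?_, z, ?_, hGzy.symm⟩
            · rw [Function.update_of_ne h1]
              exact ⟨hy1, hIy⟩
            · rw [Function.update_self]
              rfl
        · obtain ⟨v1, hv1, v2, hv2, hadj⟩ := hB3 w1 w2 hK
          have hv1I : v1 ∉ Iset := fun h => hkey v1 v2 w1 w2 h1 h2 hK hv1 hv2 hadj h
          have hv2I : v2 ∉ Iset := fun h => hkey v2 v1 w2 w1 h2 h1 hK.symm hv2 hv1 hadj.symm h
          rcases hGstep v1 v2 hadj hv1I hv2I with hG | hxy'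
          · refine ⟨v1, ?_, v2, ?_, hG⟩
            · rw [Function.update_of_ne h1]
              exact ⟨hv1, hv1I⟩
            · rw [Function.update_of_ne h2]
              exact ⟨hv2, hv2I⟩
          · exfalso
            rcases hxy' with ⟨ha, hb⟩ | ⟨ha, hb⟩
            · have e1 := hxonly w1 (ha ▸ hv1)
              have e2 := hyonly w2 (hb ▸ hv2)
              rw [e1, e2] at hK
              exact hNK _ _ hK
            · have e1 := hyonly w1 (ha ▸ hv1)
              have e2 := hxonly w2 (hb ▸ hv2)
              rw [e1, e2] at hK
              exact hNK _ _ hK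
  · push_neg at hEx
    have hEx' : ∀ w, ¬ B w ⊆ Iset := fun w => hEx w
    by_cases hWx : ∃ W, x ∈ B W
    · obtain ⟨W, hW⟩ := hWx
      have hxonly : ∀ w, x ∈ B w → w = W := by
        intro w hw
        by_contra hne
        exact hdisj w W hne x hw hW
      set A' : Set U := (B W \ Iset) ∪ {z} with hA'
      have hxA' : x ∈ A' := Or.inl ⟨hW, hIx⟩
      have hzA' : z ∈ A' := Or.inr rfl
      have hxzy : ∀ v, v ∈ B W → v = y → ReflTransGen (VStep G.spanningCoe A') x v := by
        intro v hv hvy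
        subst hvy
        exact (ReflTransGen.single ⟨hxA', hzA', hGzx.symm⟩).tail ⟨hzA', Or.inl ⟨hv, hIy⟩, hGzy⟩
      have hconnW : VConn G.spanningCoe A' := by
        set φ : U → U := fun u => if u ∈ Iset then x else u with hφ
        have hφI : ∀ u, u ∈ Iset → φ u = x := fun u hu => by rw [hφ]; exact if_pos hu
        have hφN : ∀ u, u ∉ Iset → φ u = u := fun u hu => by rw [hφ]; exact if_neg hu
        refine mapconn φ (hV W) ?_ ?_ ⟨x, hxA'⟩ ?_
        · rintro u v ⟨hu, hv, hadj⟩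
          by_cases huI : u ∈ Iset
          · by_cases hvI : v ∈ Iset
            · rw [hφI u huI, hφI v hvI]
            · obtain ⟨hvxy, hvB⟩ := hIstep W u v hu hv hadj huI hvI
              rw [hφI u huI, hφN v hvI]
              rcases hvxy with h | h
              · rw [h]
              · exact hxzy v hvB h
          · by_cases hvI : v ∈ Iset
            · obtain ⟨huxy, huB⟩ := hIstep W v u hv hu hadj.symm hvI huI
              rw [hφN u huI, hφI v hvI]
              rcases huxy with h | h
              · rw [h]
              · exact rtg_symm vstep_symm (hxzy u huB h)
            · rcases hGstep u v hadj huI hvI with hG | hxy'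
              · rw [hφN u huI, hφN v hvI]
                exact ReflTransGen.single ⟨Or.inl ⟨hu, huI⟩, Or.inl ⟨hv, hvI⟩, hG⟩
              · rw [hφN u huI, hφN v hvI]
                rcases hxy' with ⟨ha, hb⟩ | ⟨ha, hb⟩
                · rw [ha]
                  exact hxzy v hv hb
                · rw [hb]
                  exact rtg_symm vstep_symm (hxzy u hu ha)
        · intro a ha
          by_cases haI : a ∈ Iset
          · rw [hφI a haI]
            exact hxA'
          · rw [hφN a haI]
            exact Or.inl ⟨ha, haI⟩
        · rintro b (⟨hb, hbI⟩ | hb)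
          · exact ⟨b, hb, by rw [hφN b hbI]⟩
          · refine ⟨x, hW, ?_⟩
            rw [hφN x hIx]
            have hbz : b = z := hb
            rw [hbz]
            exact ReflTransGen.single ⟨hzA', hxA', hGzx⟩
      have hkey : ∀ va vb wA wB, wA ≠ wB →
          ¬ (wA = W ∧ y ∈ B wB) → ¬ (wB = W ∧ y ∈ B wA) →
          va ∈ B wA → vb ∈ B wB → H'.Adj va vb → va ∈ Iset → False := by
        intro va vb wA wB hAB hA hB hva hvb hadj' hvaI
        have hJab := hIedge hadj' hvaI
        have hvbJ : vb ∈ J.verts := hJab.snd_mem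
        rcases hMeet wA (hEx' wA) va hva hvaI with hxA | hyA
        · have hWA : wA = W := hxonly wA hxA
          by_cases hvbI : vb ∈ Iset
          · rcases hMeet wB (hEx' wB) vb hvb hvbI with hxB | hyB
            · exact hAB (hWA.trans (hxonly wB hxB).symm)
            · exact hA ⟨hWA, hyB⟩
          · rcases hJnI vb hvbJ hvbI with h | h
            · exact hAB (hWA.trans (hxonly wB (h ▸ hvb)).symm)
            · exact hA ⟨hWA, h ▸ hvb⟩
        · by_cases hvbI : vb ∈ Iset
          · rcases hMeet wB (hEx' wB) vb hvb hvbI with hxB | hyB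
            · exact hB ⟨hxonly wB hxB, hyA⟩
            · exact hdisj wA wB hAB y hyA hyB
          · rcases hJnI vb hvbJ hvbI with h | h
            · exact hB ⟨hxonly wB (h ▸ hvb), hyA⟩
            · exact hdisj wA wB hAB y hyA (h ▸ hvb)
      have hmem' : ∀ w v, v ∈ B w → v ∉ Iset →
          v ∈ Function.update (fun w => B w \ Iset) W A' w := by
        intro w v hv hvI
        by_cases hw : w = W
        · subst hw
          rw [Function.update_self]
          exact Or.inl ⟨hv, hvI⟩
        · rw [Function.update_of_ne hw]
          exact ⟨hv, hvI⟩
      refine ⟨Function.update (fun w => B w \ Iset) W A', ?_, ?_, ?_⟩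
      · intro w
        by_cases hw : w = W
        · subst hw
          rw [Function.update_self]
          exact vconn_iff.mp hconnW
        · rw [Function.update_of_ne hw]
          refine vconn_iff.mp (hconnD w y (hEx' w) hIy ?_ ?_)
          · rintro ⟨u, hu, huI⟩
            rcases hMeet w (hEx' w) u hu huI with h | h
            · exact absurd (hxonly w h) hw
            · exact h
          · intro v hv hvB
            rcases hv with h | h
            · exact absurd (hxonly w (h ▸ hvB)) hw
            · exact h
      · intro w1 w2 hne'
        refine Set.disjoint_left.mpr ?_
        intro v hv1 hv2
        have hm : ∀ w, v ∈ Function.update (fun w => B w \ Iset) W A' w →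
            v ∈ B w ∨ (w = W ∧ v = z) := by
          intro w hv
          by_cases hw : w = W
          · rw [hw, Function.update_self] at hv
            rcases hv with ⟨h, -⟩ | h
            · exact Or.inl (by rw [hw]; exact h)
            · exact Or.inr ⟨hw, h⟩
          · rw [Function.update_of_ne hw] at hv
            exact Or.inl hv.1
        rcases hm w1 hv1 with h1 | ⟨hw1, hz1⟩
        · rcases hm w2 hv2 with h2 | ⟨hw2, hz2⟩
          · exact hdisj w1 w2 hne' v h1 h2
          · exact hBz w1 (hz2 ▸ h1)
        · rcases hm w2 hv2 with h2 | ⟨hw2, hz2⟩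
          · exact hBz w2 (hz1 ▸ h2)
          · exact hne' (hw1.trans hw2.symm)
      · intro w1 w2 hK
        have hne12 := hK.ne
        by_cases hy12 : w1 = W ∧ y ∈ B w2
        · refine ⟨z, ?_, y, ?_, hGzy⟩
          · rw [hy12.1, Function.update_self]
            exact hzA'
          · have hw2 : w2 ≠ W := fun h => hne12 (hy12.1.trans h.symm)
            rw [Function.update_of_ne hw2]
            exact ⟨hy12.2, hIy⟩
        · by_cases hy21 : w2 = W ∧ y ∈ B w1
          · refine ⟨y, ?_, z, ?_, hGzy.symm⟩
            · have hw1 : w1 ≠ W := fun h => hne12 (h.trans hy21.1.symm)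
              rw [Function.update_of_ne hw1]
              exact ⟨hy21.2, hIy⟩
            · rw [hy21.1, Function.update_self]
              exact hzA'
          · obtain ⟨v1, hv1, v2, hv2, hadj⟩ := hB3 w1 w2 hK
            have hv1I : v1 ∉ Iset := fun h =>
              hkey v1 v2 w1 w2 hne12 hy12 hy21 hv1 hv2 hadj h
            have hv2I : v2 ∉ Iset := fun h =>
              hkey v2 v1 w2 w1 (Ne.symm hne12) hy21 hy12 hv2 hv1 hadj.symm h
            rcases hGstep v1 v2 hadj hv1I hv2I with hG | hxy'
            · exact ⟨v1, hmem' w1 v1 hv1 hv1I, v2, hmem' w2 v2 hv2 hv2I, hG⟩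
            · exfalso
              rcases hxy' with ⟨ha, hb⟩ | ⟨ha, hb⟩
              · exact hy12 ⟨hxonly w1 (ha ▸ hv1), hb ▸ hv2⟩
              · exact hy21 ⟨hxonly w2 (hb ▸ hv2), ha ▸ hv1⟩
    · push_neg at hWx
      have hkey : ∀ va vb wA wB, wA ≠ wB →
          va ∈ B wA → vb ∈ B wB → H'.Adj va vb → va ∈ Iset → False := by
        intro va vb wA wB hAB hva hvb hadj' hvaI
        have hJab := hIedge hadj' hvaI
        have hvbJ : vb ∈ J.verts := hJab.snd_mem
        rcases hMeet wA (hEx' wA) va hva hvaI with hxA | hyA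
        · exact hWx wA hxA
        · by_cases hvbI : vb ∈ Iset
          · rcases hMeet wB (hEx' wB) vb hvb hvbI with hxB | hyB
            · exact hWx wB hxB
            · exact hdisj wA wB hAB y hyA hyB
          · rcases hJnI vb hvbJ hvbI with h | h
            · exact hWx wB (h ▸ hvb)
            · exact hdisj wA wB hAB y hyA (h ▸ hvb)
      refine ⟨fun w => B w \ Iset, ?_, ?_, ?_⟩
      · intro w
        refine vconn_iff.mp (hconnD w y (hEx' w) hIy ?_ ?_)
        · rintro ⟨u, hu, huI⟩
          rcases hMeet w (hEx' w) u hu huI with h | h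
          · exact absurd h (hWx w)
          · exact h
        · intro v hv hvB
          rcases hv with h | h
          · exact absurd (h ▸ hvB) (hWx w)
          · exact h
      · intro w1 w2 hne'
        exact Set.disjoint_left.mpr (fun v hv1 hv2 => hdisj w1 w2 hne' v hv1.1 hv2.1)
      · intro w1 w2 hK
        obtain ⟨v1, hv1, v2, hv2, hadj⟩ := hB3 w1 w2 hK
        have hv1I : v1 ∉ Iset := fun h => hkey v1 v2 w1 w2 hK.ne hv1 hv2 hadj h
        have hv2I : v2 ∉ Iset := fun h =>
          hkey v2 v1 w2 w1 (Ne.symm hK.ne) hv2 hv1 hadj.symm h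
        rcases hGstep v1 v2 hadj hv1I hv2I with hG | hxy'
        · exact ⟨v1, ⟨hv1, hv1I⟩, v2, ⟨hv2, hv2I⟩, hG⟩
        · exfalso
          rcases hxy' with ⟨ha, -⟩ | ⟨-, hb⟩
          · exact hWx w1 (ha ▸ hv1)
          · exact hWx w2 (hb ▸ hv2)

end MainLemma

/-- Lemma 18: let `t ≥ 3`, let `z` be a degree-2 vertex of `G`
with neighbors `x` and `y`, and let `J` be an `xy`-outerplanar graph on at least
three vertices meeting `G` exactly in `{x, y}`.  If `G'` is obtained from `G` by
replacing the path `xzy` with `J`, then `G` is `K_{2,t}`-minor-free iff `G'` is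
`K_{2,t}`-minor-free. -/
theorem replace_path_by_outerplanar {U : Type*} [Fintype U] (t : ℕ) (ht : 3 ≤ t)
    (G J : (⊤ : SimpleGraph U).Subgraph) (z x y : U)
    (hz : z ∈ G.verts) (hxy : x ≠ y) (hdeg : G.neighborSet z = {x, y})
    (hJG : J.verts ∩ G.verts = {x, y}) (hJ3 : 3 ≤ J.verts.ncard)
    (hJop : XYOuterplanar J.spanningCoe J.verts x y) :
    MinorFree (completeBipartiteGraph (Fin 2) (Fin t)) G.spanningCoe ↔
    MinorFree (completeBipartiteGraph (Fin 2) (Fin t))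
      ((G.deleteVerts {z}) ⊔ J).spanningCoe := by
  constructor
  · intro hfree hminor'
    exact hfree (dir2 t ht G J z x y hz hxy hdeg hJG hJ3 hJop hminor')
  · intro hfree hminor
    exact hfree (dir1 t ht G J z x y hz hxy hdeg hJG hJ3 hJop hminor)

end K24Paper
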